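/- arXiv:2205.00114 — 7 statements merged into one kernel-verified Lean document; each statement's English description precedes it below -/
import Mathlib

section
/- An element x of the ring R̄ of Colombeau generalized real numbers is invertible if and only if there exists r ∈ ℝ such that some (equivalently, every) representative (x_ε) satisfies |x_ε| > ε^r for all sufficiently small ε. -/
noncomputable section

open Real

/-- `P ε` holds for all sufficiently small `ε ∈ (0,1]`. -/
def SmallEv (P : ℝ → Prop) : Prop :=
  ∃ η : ℝ, 0 < η ∧ ∀ ε : ℝ, 0 < ε → ε ≤ η → P ε

/-- A net `x : (0,1] → ℝ` (modeled on all of `ℝ`) is moderate. -/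
def Moderate (x : ℝ → ℝ) : Prop :=
  ∃ r : ℝ, SmallEv fun ε => |x ε| < ε ^ r

/-- A net is negligible. -/
def Negligible (x : ℝ → ℝ) : Prop :=
  ∀ n : ℕ, SmallEv fun ε => |x ε| < ε ^ (n : ℝ)

lemma smallEv_and {P Q : ℝ → Prop} (hP : SmallEv P) (hQ : SmallEv Q) :
    SmallEv fun ε => P ε ∧ Q ε := by
  obtain ⟨a, ha, hP⟩ := hP
  obtain ⟨b, hb, hQ⟩ := hQ
  exact ⟨min a b, lt_min ha hb, fun ε hε hle =>
    ⟨hP ε hε (hle.trans (min_le_left _ _)), hQ ε hε (hle.trans (min_le_right _ _))⟩⟩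

lemma moderate_zero : Moderate (0 : ℝ → ℝ) :=
  ⟨0, 1, one_pos, fun ε hε _ => by simp⟩

lemma moderate_one : Moderate (1 : ℝ → ℝ) := by
  refine ⟨-1, 1/2, by norm_num, fun ε hε hle => ?_⟩
  have h1 : ε < 1 := lt_of_le_of_lt hle (by norm_num)
  show |(1 : ℝ → ℝ) ε| < ε ^ (-1 : ℝ)
  rw [Real.rpow_neg_one]
  simpa using (one_lt_inv₀ hε).mpr h1

lemma moderate_neg {x : ℝ → ℝ} (hx : Moderate x) : Moderate (-x) := by
  obtain ⟨r, η, hη, h⟩ := hx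
  exact ⟨r, η, hη, fun ε hε hle => by simpa using h ε hε hle⟩

lemma moderate_add {x y : ℝ → ℝ} (hx : Moderate x) (hy : Moderate y) :
    Moderate (x + y) := by
  obtain ⟨r, hr⟩ := hx
  obtain ⟨s, hs⟩ := hy
  obtain ⟨η, hη, h⟩ := smallEv_and hr hs
  refine ⟨min r s - 1, min η (1/2), lt_min hη (by norm_num), fun ε hε hle => ?_⟩
  have hεhalf : ε ≤ 1/2 := hle.trans (min_le_right _ _)
  have hε1 : ε ≤ 1 := hεhalf.trans (by norm_num)
  obtain ⟨h1, h2⟩ := h ε hε (hle.trans (min_le_left _ _))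
  have h2inv : (2 : ℝ) ≤ ε⁻¹ := by
    rw [le_inv_comm₀ (by norm_num) hε]
    linarith
  calc |(x + y) ε| ≤ |x ε| + |y ε| := abs_add_le _ _
    _ < ε ^ r + ε ^ s := add_lt_add h1 h2
    _ ≤ ε ^ min r s + ε ^ min r s :=
        add_le_add (Real.rpow_le_rpow_of_exponent_ge hε hε1 (min_le_left _ _))
          (Real.rpow_le_rpow_of_exponent_ge hε hε1 (min_le_right _ _))
    _ = 2 * ε ^ min r s := by ring
    _ ≤ ε⁻¹ * ε ^ min r s :=
        mul_le_mul_of_nonneg_right h2inv (Real.rpow_nonneg hε.le _)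
    _ = ε ^ (min r s - 1) := by
        rw [← Real.rpow_neg_one ε, ← Real.rpow_add hε]
        ring_nf

lemma moderate_mul {x y : ℝ → ℝ} (hx : Moderate x) (hy : Moderate y) :
    Moderate (x * y) := by
  obtain ⟨r, hr⟩ := hx
  obtain ⟨s, hs⟩ := hy
  obtain ⟨η, hη, h⟩ := smallEv_and hr hs
  refine ⟨r + s, η, hη, fun ε hε hle => ?_⟩
  obtain ⟨h1, h2⟩ := h ε hε hle
  have : |(x * y) ε| = |x ε| * |y ε| := by simp [abs_mul]
  rw [this, Real.rpow_add hε]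
  exact mul_lt_mul'' h1 h2 (abs_nonneg _) (abs_nonneg _)

/-- The ring `E_M` of moderate nets, as a subring of `ℝ → ℝ`. -/
def EMring : Subring (ℝ → ℝ) where
  carrier := {x | Moderate x}
  mul_mem' := moderate_mul
  one_mem' := moderate_one
  add_mem' := moderate_add
  zero_mem' := moderate_zero
  neg_mem' := moderate_neg

lemma negligible_zero : Negligible (0 : ℝ → ℝ) := fun n =>
  ⟨1, one_pos, fun ε hε _ => by simpa using Real.rpow_pos_of_pos hε (n : ℝ)⟩

lemma negligible_add {x y : ℝ → ℝ} (hx : Negligible x) (hy : Negligible y) :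
    Negligible (x + y) := by
  intro n
  obtain ⟨η, hη, h⟩ := smallEv_and (hx (n + 1)) (hy (n + 1))
  refine ⟨min η (1/2), lt_min hη (by norm_num), fun ε hε hle => ?_⟩
  have hεhalf : ε ≤ 1/2 := hle.trans (min_le_right _ _)
  obtain ⟨h1, h2⟩ := h ε hε (hle.trans (min_le_left _ _))
  have hcast : ((n + 1 : ℕ) : ℝ) = (n : ℝ) + 1 := by push_cast; ring
  have hsplit : ε ^ ((n + 1 : ℕ) : ℝ) = ε ^ (n : ℝ) * ε := by
    rw [hcast, Real.rpow_add hε, Real.rpow_one]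
  calc |(x + y) ε| ≤ |x ε| + |y ε| := abs_add_le _ _
    _ < ε ^ ((n + 1 : ℕ) : ℝ) + ε ^ ((n + 1 : ℕ) : ℝ) := add_lt_add h1 h2
    _ = (2 * ε) * ε ^ (n : ℝ) := by rw [hsplit]; ring
    _ ≤ 1 * ε ^ (n : ℝ) := by
        apply mul_le_mul_of_nonneg_right _ (Real.rpow_nonneg hε.le _)
        linarith
    _ = ε ^ (n : ℝ) := one_mul _

lemma negligible_smul {x y : ℝ → ℝ} (hx : Moderate x) (hy : Negligible y) :
    Negligible (x * y) := by
  intro n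
  obtain ⟨r, hr⟩ := hx
  set k : ℕ := n + Nat.ceil (max 0 (-r)) with hk
  obtain ⟨η, hη, h⟩ := smallEv_and hr (hy k)
  refine ⟨min η 1, lt_min hη one_pos, fun ε hε hle => ?_⟩
  have hε1 : ε ≤ 1 := hle.trans (min_le_right _ _)
  obtain ⟨h1, h2⟩ := h ε hε (hle.trans (min_le_left _ _))
  have hexp : (n : ℝ) ≤ r + (k : ℝ) := by
    have h1' : (-r) ≤ (Nat.ceil (max 0 (-r)) : ℝ) :=
      le_trans (le_max_right 0 (-r)) (Nat.le_ceil _)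
    have : (k : ℝ) = (n : ℝ) + (Nat.ceil (max 0 (-r)) : ℝ) := by
      rw [hk]; push_cast; ring
    linarith
  show |(x * y) ε| < ε ^ (n : ℝ)
  have hxy : |(x * y) ε| = |x ε| * |y ε| := by simp [abs_mul]
  rw [hxy]
  calc |x ε| * |y ε| < ε ^ r * ε ^ (k : ℝ) :=
        mul_lt_mul'' h1 h2 (abs_nonneg _) (abs_nonneg _)
    _ = ε ^ (r + (k : ℝ)) := (Real.rpow_add hε _ _).symm
    _ ≤ ε ^ (n : ℝ) := Real.rpow_le_rpow_of_exponent_ge hε hε1 hexp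

/-- The ideal of negligible nets inside `E_M`. -/
def NegIdeal : Ideal EMring where
  carrier := {x | Negligible x.1}
  add_mem' := fun hx hy => negligible_add hx hy
  zero_mem' := negligible_zero
  smul_mem' := fun c _ hx => negligible_smul c.2 hx

/-- The ring of Colombeau generalized real numbers. -/
abbrev Rbar := EMring ⧸ NegIdeal

/-- Class of a moderate net in `R̄`. -/
def mkR (x : EMring) : Rbar := Ideal.Quotient.mk NegIdeal x

/-- The valuation `V` on the quotient. -/
def VQ (x : Rbar) : ℝ :=
  sSup {r : ℝ | ∃ x' : EMring, mkR x' = x ∧ SmallEv fun ε => |x'.1 ε| < ε ^ r}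

open Classical in
/-- sharp norm on `R̄`. -/
def normQ (x : Rbar) : ℝ := if x = 0 then 0 else Real.exp (-(VQ x))

/-- sharp distance on `R̄`. -/
def sharpDist (x y : Rbar) : ℝ := normQ (x - y)

/-- `x` is nonnegative: it has a representative which is nonnegative on `(0,1]`. -/
def NonnegQ (x : Rbar) : Prop :=
  ∃ x' : EMring, mkR x' = x ∧ ∀ ε : ℝ, 0 < ε → ε ≤ 1 → 0 ≤ x'.1 ε

/-- `x` belongs to `V_r(0)`: some representative satisfies `|x_ε| < ε^r` eventually. -/
def InVr (r : ℝ) (x : Rbar) : Prop :=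
  ∃ x' : EMring, mkR x' = x ∧ SmallEv fun ε => |x'.1 ε| < ε ^ r

/-- `x ≥ α^m`: some representative satisfies `x_ε ≥ ε^m` eventually. -/
def GeAlpha (m : ℝ) (x : Rbar) : Prop :=
  ∃ x' : EMring, mkR x' = x ∧ SmallEv fun ε => ε ^ m ≤ x'.1 ε

lemma idNet_moderate : Moderate (fun ε : ℝ => ε) := by
  refine ⟨0, 1/2, by norm_num, fun ε hε hle => ?_⟩
  show |ε| < ε ^ (0 : ℝ)
  rw [Real.rpow_zero, abs_of_pos hε]
  linarith

/-- The generalized number `α = [ε ↦ ε]`. -/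
def alphaQ : Rbar := mkR ⟨fun ε => ε, idNet_moderate⟩

lemma chi_moderate (S : Set ℝ) : Moderate (S.indicator fun _ => (1 : ℝ)) := by
  refine ⟨-1, 1/2, by norm_num, fun ε hε hle => ?_⟩
  have h1 : ε < 1 := lt_of_le_of_lt hle (by norm_num)
  have hlt : (1 : ℝ) < ε ^ (-1 : ℝ) := by
    rw [Real.rpow_neg_one]
    exact (one_lt_inv₀ hε).mpr h1
  by_cases h : ε ∈ S <;> simp [Set.indicator, h] <;> linarith [hlt]

/-- Hypernatural numbers: moderate nets with values in `ℕ`. -/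
def HyperNat : Type := {f : ℝ → ℕ // Moderate fun ε => (f ε : ℝ)}

/-- Strict order on hypernaturals: eventually pointwise. -/
def HNlt (m n : HyperNat) : Prop := SmallEv fun ε => m.1 ε < n.1 ε


lemma mkR_eq_iff {a b : EMring} : mkR a = mkR b ↔ Negligible (a.1 - b.1) := by
  rw [mkR, mkR, Ideal.Quotient.eq]
  exact Iff.rfl

lemma isUnit_of_bounded (x' : EMring) (r : ℝ)
    (h : SmallEv fun ε => ε ^ r < |x'.1 ε|) : IsUnit (mkR x') := by
  obtain ⟨η, hη, h⟩ := h
  have hymod : Moderate (fun ε => (x'.1 ε)⁻¹) := by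
    refine ⟨-r, η, hη, fun ε hε hle => ?_⟩
    have hr : (0:ℝ) < ε ^ r := Real.rpow_pos_of_pos hε r
    have hx := h ε hε hle
    show |(x'.1 ε)⁻¹| < ε ^ (-r)
    rw [abs_inv, Real.rpow_neg hε.le]
    exact (inv_lt_inv₀ (hr.trans hx) hr).mpr hx
  set y : EMring := ⟨fun ε => (x'.1 ε)⁻¹, hymod⟩ with hy
  have hmul : mkR x' * mkR y = 1 := by
    have : mkR (x' * y) = mkR 1 := by
      rw [mkR_eq_iff]
      intro n
      refine ⟨η, hη, fun ε hε hle => ?_⟩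
      have hx := h ε hε hle
      have hx' : ε ^ r < |x'.1 ε| := hx
      have hx0 : x'.1 ε ≠ 0 := by
        intro h0
        rw [h0] at hx'
        simpa using (Real.rpow_pos_of_pos hε r).trans hx'
      show |((x' * y : EMring).1 - (1 : EMring).1) ε| < ε ^ (n : ℝ)
      have he : ((x' * y : EMring).1 - (1 : EMring).1) ε = x'.1 ε * (x'.1 ε)⁻¹ - 1 := rfl
      rw [he, mul_inv_cancel₀ hx0, sub_self, abs_zero]
      exact Real.rpow_pos_of_pos hε _
    rw [show (mkR x' * mkR y : Rbar) = mkR (x' * y) from (map_mul _ _ _).symm, this]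
    rfl
  exact IsUnit.of_mul_eq_one _ hmul

lemma bounded_of_isUnit (x' : EMring) (h : IsUnit (mkR x')) :
    ∃ r : ℝ, SmallEv fun ε => ε ^ r < |x'.1 ε| := by
  obtain ⟨b, hb⟩ := h.exists_right_inv
  obtain ⟨y', rfl⟩ := Ideal.Quotient.mk_surjective b
  have hneg : Negligible ((x' * y' - 1 : EMring) : ℝ → ℝ) := by
    rw [show ((x' * y' - 1 : EMring) : ℝ → ℝ) = (x' * y' : EMring).1 - (1 : EMring).1 from rfl]
    rw [← mkR_eq_iff]
    rw [show mkR (x' * y') = mkR x' * mkR y' from map_mul _ _ _]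
    exact hb.trans rfl
  obtain ⟨s, hs⟩ := y'.2
  obtain ⟨η, hη, hh⟩ := smallEv_and hs (hneg 1)
  refine ⟨1 - s, min η (1/3), lt_min hη (by norm_num), fun ε hε hle => ?_⟩
  obtain ⟨h1, h2⟩ := hh ε hε (hle.trans (min_le_left _ _))
  have hε3 : ε ≤ 1/3 := hle.trans (min_le_right _ _)
  have ht : (0:ℝ) < ε ^ s := Real.rpow_pos_of_pos hε s
  -- h2 : |x'ε * y'ε - 1| < ε ^ (1:ℕ)
  have h2' : |x'.1 ε * y'.1 ε - 1| < ε := by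
    have := h2
    rwa [show ((x' * y' - 1 : EMring) : ℝ → ℝ) ε = x'.1 ε * y'.1 ε - 1 from rfl,
      Real.rpow_natCast, pow_one] at this
  have hprod : 1 - ε < |x'.1 ε| * |y'.1 ε| := by
    rw [← abs_mul]
    have := abs_sub_abs_le_abs_sub 1 (x'.1 ε * y'.1 ε)
    rw [abs_one, abs_sub_comm] at this
    linarith [this, h2']
  have goal' : ε < |x'.1 ε| * ε ^ s := by
    have habs : (0:ℝ) ≤ |x'.1 ε| := abs_nonneg _
    nlinarith [mul_le_mul_of_nonneg_left h1.le habs]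
  rw [Real.rpow_sub hε, Real.rpow_one, div_lt_iff₀ ht]
  exact goal'

lemma bounded_transfer {a b : EMring} (r : ℝ) (hab : mkR a = mkR b)
    (h : SmallEv fun ε => ε ^ r < |a.1 ε|) :
    SmallEv fun ε => ε ^ (r + 1) < |b.1 ε| := by
  have hneg : Negligible (a.1 - b.1) := mkR_eq_iff.mp hab
  obtain ⟨k, hk⟩ : ∃ k : ℕ, r + 2 ≤ (k : ℝ) := exists_nat_ge (r + 2)
  obtain ⟨η, hη, hh⟩ := smallEv_and h (hneg k)
  refine ⟨min η (1/2), lt_min hη (by norm_num), fun ε hε hle => ?_⟩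
  obtain ⟨h1, h2⟩ := hh ε hε (hle.trans (min_le_left _ _))
  have hε2 : ε ≤ 1/2 := hle.trans (min_le_right _ _)
  have hε1 : ε ≤ 1 := hε2.trans (by norm_num)
  have hk2 : ε ^ (k:ℝ) ≤ ε ^ (r + 2) := Real.rpow_le_rpow_of_exponent_ge hε hε1 hk
  have hA : (0:ℝ) < ε ^ r := Real.rpow_pos_of_pos hε r
  have e1 : ε ^ (r + 1) = ε ^ r * ε := by rw [Real.rpow_add hε, Real.rpow_one]
  have e2 : ε ^ (r + 2) = ε ^ r * (ε * ε) := by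
    rw [show r + 2 = r + 1 + 1 by ring, Real.rpow_add hε, Real.rpow_one, e1]; ring
  have hdiff : |a.1 ε - b.1 ε| < ε ^ r * (ε * ε) := lt_of_lt_of_le h2 (hk2.trans_eq e2)
  have htri : |a.1 ε| - |a.1 ε - b.1 ε| ≤ |b.1 ε| := by
    have := abs_sub_abs_le_abs_sub (a.1 ε) (b.1 ε)
    linarith
  rw [e1]
  nlinarith [h1, hdiff, htri,
    mul_lt_mul_of_pos_left (show ε < 1 - ε * ε by nlinarith) hA]

/-- `x ∈ R̄` is invertible iff some (equivalently every) representative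
satisfies `|x_ε| > ε^r` for some `r` and all sufficiently small `ε`. -/
theorem isUnit_iff_representative_bounded_below :
    ∀ x : Rbar,
      (IsUnit x ↔ ∃ (x' : EMring) (r : ℝ), mkR x' = x ∧ SmallEv fun ε => ε ^ r < |x'.1 ε|) ∧
      (IsUnit x ↔ ∃ r : ℝ, ∀ x' : EMring, mkR x' = x → SmallEv fun ε => ε ^ r < |x'.1 ε|) := by
  intro x
  obtain ⟨x0, rfl⟩ := Ideal.Quotient.mk_surjective x
  have key1 : IsUnit (mkR x0) ↔
      ∃ (x' : EMring) (r : ℝ), mkR x' = mkR x0 ∧ SmallEv fun ε => ε ^ r < |x'.1 ε| := by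
    constructor
    · intro hu
      obtain ⟨r, hr⟩ := bounded_of_isUnit x0 hu
      exact ⟨x0, r, rfl, hr⟩
    · rintro ⟨x', r, hx', h⟩
      rw [← hx']
      exact isUnit_of_bounded x' r h
  refine ⟨key1, ?_⟩
  constructor
  · intro hu
    obtain ⟨r, hr⟩ := bounded_of_isUnit x0 hu
    exact ⟨r + 1, fun x' hx' => bounded_transfer r hx'.symm hr⟩
  · rintro ⟨r, h⟩
    exact isUnit_of_bounded x0 r (h x0 rfl)
end
end

section
/- A nonzero element x of the ring R̄ of Colombeau generalized real numbers is either invertible or a zero divisor. More precisely, if x is not invertible then there exists an idempotent e ∈ R̄ with e ≠ 0 and e ≠ 1 such that e·x = 0. -/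
noncomputable section

open Real

lemma mkR_eq_zero {v : EMring} : mkR v = 0 ↔ Negligible v.1 := by
  rw [mkR, Ideal.Quotient.eq_zero_iff_mem]; rfl

lemma isUnit_of_bound (x' : EMring) (n : ℕ) (η : ℝ) (hη : 0 < η)
    (hb : ∀ ε : ℝ, 0 < ε → ε ≤ η → ε ^ (n : ℝ) ≤ |x'.1 ε|) : IsUnit (mkR x') := by
  set y : ℝ → ℝ := fun ε => if 0 < ε ∧ ε ≤ η then (x'.1 ε)⁻¹ else 0 with hy
  have hxne : ∀ ε : ℝ, 0 < ε → ε ≤ η → x'.1 ε ≠ 0 := by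
    intro ε hε hle h0
    have := hb ε hε hle
    rw [h0, abs_zero] at this
    exact absurd this (not_le.mpr (Real.rpow_pos_of_pos hε _))
  have hymod : Moderate y := by
    refine ⟨-(n : ℝ) - 1, min η (1/2), lt_min hη (by norm_num), fun ε hε hle => ?_⟩
    have hεη : ε ≤ η := hle.trans (min_le_left _ _)
    have hε1 : ε < 1 := lt_of_le_of_lt (hle.trans (min_le_right _ _)) (by norm_num)
    have hx := hb ε hε hεη
    have hxpos : 0 < |x'.1 ε| := lt_of_lt_of_le (Real.rpow_pos_of_pos hε _) hx
    show |y ε| < _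
    have h1 : |y ε| = |x'.1 ε|⁻¹ := by
      simp only [hy]
      rw [if_pos (show 0 < ε ∧ ε ≤ η from ⟨hε, hεη⟩), abs_inv]
    rw [h1]
    have h2 : |x'.1 ε|⁻¹ ≤ ε ^ (-(n : ℝ)) := by
      rw [Real.rpow_neg hε.le]
      exact inv_anti₀ (Real.rpow_pos_of_pos hε _) hx
    refine lt_of_le_of_lt h2 ?_
    apply Real.rpow_lt_rpow_of_exponent_gt hε hε1
    linarith
  have hprod : mkR x' * mkR ⟨y, hymod⟩ = 1 := by
    rw [mkR, mkR, ← map_mul, ← map_one (Ideal.Quotient.mk NegIdeal),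
      Ideal.Quotient.eq]
    show Negligible _
    intro m
    refine ⟨η, hη, fun ε hε hle => ?_⟩
    have : x'.1 ε * y ε - 1 = 0 := by
      simp only [hy]
      rw [if_pos (show 0 < ε ∧ ε ≤ η from ⟨hε, hle⟩),
        mul_inv_cancel₀ (hxne ε hε hle)]; ring
    show |(x' * ⟨y, hymod⟩ - 1 : EMring).1 ε| < _
    have hval : (x' * ⟨y, hymod⟩ - 1 : EMring).1 ε = x'.1 ε * y ε - 1 := rfl
    rw [hval, this, abs_zero]
    exact Real.rpow_pos_of_pos hε _
  exact IsUnit.of_mul_eq_one _ hprod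

lemma exists_bad_seq (f : ℝ → ℝ)
    (h : ∀ n : ℕ, ∀ η : ℝ, 0 < η → ∃ ε : ℝ, 0 < ε ∧ ε ≤ η ∧ |f ε| < ε ^ (n : ℝ)) :
    ∃ s : ℕ → ℝ, (∀ k, 0 < s k) ∧ (∀ k, s k ≤ (1/2) ^ (k+1)) ∧
      (∀ k, s (k+1) ≤ s k / 2) ∧ (∀ k, |f (s k)| < (s k) ^ (k : ℝ)) := by
  have step : ∀ (k : ℕ) (η : ℝ), 0 < η →
      ∃ ε : ℝ, 0 < ε ∧ ε ≤ η ∧ |f ε| < ε ^ (k : ℝ) := h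
  let s : ℕ → {r : ℝ // 0 < r} := fun k =>
    Nat.rec (motive := fun _ => {r : ℝ // 0 < r})
      ⟨(step 0 (1/2) (by norm_num)).choose, (step 0 (1/2) (by norm_num)).choose_spec.1⟩
      (fun k prev =>
        ⟨(step (k+1) (prev.1/2) (half_pos prev.2)).choose,
         (step (k+1) (prev.1/2) (half_pos prev.2)).choose_spec.1⟩) k
  have hs0 : (s 0).1 ≤ 1/2 := (step 0 (1/2) (by norm_num)).choose_spec.2.1
  have hstep : ∀ k, (s (k+1)).1 ≤ (s k).1 / 2 := fun k =>
    (step (k+1) ((s k).1/2) (half_pos (s k).2)).choose_spec.2.1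
  have hbad : ∀ k, |f ((s k).1)| < ((s k).1) ^ (k : ℝ) := by
    intro k
    cases k with
    | zero => exact (step 0 (1/2) (by norm_num)).choose_spec.2.2
    | succ k => exact (step (k+1) ((s k).1/2) (half_pos (s k).2)).choose_spec.2.2
  refine ⟨fun k => (s k).1, fun k => (s k).2, ?_, hstep, hbad⟩
  intro k
  induction k with
  | zero => simpa using hs0
  | succ k ih =>
    calc (s (k+1)).1 ≤ (s k).1 / 2 := hstep k
      _ ≤ (1/2)^(k+1) / 2 := by linarith
      _ = (1/2)^(k+1+1) := by ring

/-- a nonzero element of `R̄` is either invertible or a zero divisor;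
more precisely, a non-invertible element is annihilated by a nontrivial idempotent. -/
theorem nonunit_killed_by_nontrivial_idempotent :
    (∀ x : Rbar, x ≠ 0 → ¬ IsUnit x →
      ∃ e : Rbar, e * e = e ∧ e ≠ 0 ∧ e ≠ 1 ∧ e * x = 0) ∧
    (∀ x : Rbar, x ≠ 0 → IsUnit x ∨ ∃ y : Rbar, y ≠ 0 ∧ y * x = 0) := by
  have main : ∀ x : Rbar, ¬ IsUnit x →
      ∃ e : Rbar, e * e = e ∧ e ≠ 0 ∧ e ≠ 1 ∧ e * x = 0 := by
    intro x hx
    obtain ⟨x', rfl⟩ := Ideal.Quotient.mk_surjective x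
    have hsmall : ∀ n : ℕ, ∀ η : ℝ, 0 < η →
        ∃ ε : ℝ, 0 < ε ∧ ε ≤ η ∧ |x'.1 ε| < ε ^ (n : ℝ) := by
      by_contra hcon
      push_neg at hcon
      obtain ⟨n, η, hη, hb⟩ := hcon
      exact hx (isUnit_of_bound x' n η hη hb)
    obtain ⟨s, hpos, hbnd, hdec, hbad⟩ := exists_bad_seq x'.1 hsmall
    have hle1 : ∀ k, s k ≤ 1 := fun k =>
      (hbnd k).trans (pow_le_one₀ (by norm_num) (by norm_num))
    have hmono : ∀ j k, j ≤ k → s k ≤ s j := by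
      intro j k hjk
      induction k with
      | zero => simp_all
      | succ k ih =>
        rcases Nat.lt_or_ge j (k+1) with h | h
        · have := ih (Nat.lt_succ_iff.mp h)
          have h2 := hdec k
          have := hpos k
          linarith
        · have : j = k + 1 := le_antisymm hjk h
          simp [this]
    have hstrict : ∀ j k, j < k → s k < s j := by
      intro j k hjk
      have h1 : s k ≤ s (j+1) := hmono _ _ hjk
      have h2 := hdec j
      have h3 := hpos j
      linarith
    have hsmallk : ∀ η : ℝ, 0 < η → ∃ k : ℕ, s k < η := by
      intro η hη
      obtain ⟨m, hm⟩ := exists_pow_lt_of_lt_one hη (by norm_num : (1/2 : ℝ) < 1)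
      refine ⟨m, lt_of_le_of_lt ((hbnd m).trans ?_) hm⟩
      calc ((1:ℝ)/2) ^ (m+1) = (1/2)^m * (1/2) := by ring
        _ ≤ (1/2)^m * 1 := by
            have : (0:ℝ) ≤ (1/2)^m := by positivity
            nlinarith
        _ = (1/2)^m := mul_one _
    set S : Set ℝ := Set.range s with hS
    set χ : EMring := ⟨S.indicator fun _ => (1:ℝ), chi_moderate S⟩ with hχ
    refine ⟨mkR χ, ?_, ?_, ?_, ?_⟩
    · show mkR χ * mkR χ = mkR χ
      rw [mkR, ← map_mul]
      congr 1
      ext ε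
      show (S.indicator fun _ => (1:ℝ)) ε * (S.indicator fun _ => (1:ℝ)) ε = _
      by_cases h : ε ∈ S <;> simp [h, hχ]
    · intro h0
      rw [mkR_eq_zero] at h0
      obtain ⟨η, hη, hsm⟩ := h0 0
      obtain ⟨k, hk⟩ := hsmallk η hη
      have := hsm (s k) (hpos k) hk.le
      simp only [Nat.cast_zero, Real.rpow_zero] at this
      have hmem : s k ∈ S := ⟨k, rfl⟩
      simp only [hχ, Set.indicator_of_mem hmem] at this
      norm_num at this
    · intro h1
      have hneg : Negligible (χ - 1 : EMring).1 := by
        rw [show (1 : Rbar) = mkR 1 from rfl, mkR, mkR, Ideal.Quotient.eq] at h1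
        exact h1
      obtain ⟨η, hη, hsm⟩ := hneg 0
      obtain ⟨k, hk⟩ := hsmallk η hη
      set t : ℝ := (3/4) * s k with ht
      have htpos : 0 < t := by have := hpos k; positivity
      have htS : t ∉ S := by
        rintro ⟨j, hj⟩
        rcases Nat.lt_or_ge k j with h | h
        · have h1' : s j ≤ s (k+1) := hmono _ _ h
          have h2 := hdec k
          have h3 := hpos k
          rw [hj] at *
          linarith
        · have h1' : s k ≤ s j := hmono _ _ h
          have h3 := hpos k
          rw [hj] at *
          linarith
      have htη : t ≤ η := by have := hpos k; linarith
      have := hsm t htpos htη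
      simp only [Nat.cast_zero, Real.rpow_zero] at this
      have hval : (χ - 1 : EMring).1 t = -1 := by
        show (S.indicator fun _ => (1:ℝ)) t - 1 = -1
        rw [Set.indicator_of_notMem htS]
        ring
      rw [hval] at this
      norm_num at this
    · show mkR χ * Ideal.Quotient.mk NegIdeal x' = 0
      rw [mkR, ← map_mul, ← mkR, mkR_eq_zero]
      intro n
      refine ⟨s n, hpos n, fun ε hε hle => ?_⟩
      show |(S.indicator fun _ => (1:ℝ)) ε * x'.1 ε| < ε ^ (n : ℝ)
      by_cases hmem : ε ∈ S
      · obtain ⟨k, rfl⟩ := hmem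
        have hkn : n ≤ k := by
          by_contra hlt
          push_neg at hlt
          exact absurd hle (not_le.mpr (hstrict k n hlt))
        rw [Set.indicator_of_mem (show s k ∈ S from ⟨k, rfl⟩), one_mul]
        calc |x'.1 (s k)| < (s k) ^ (k : ℝ) := hbad k
          _ ≤ (s k) ^ (n : ℝ) :=
            Real.rpow_le_rpow_of_exponent_ge (hpos k) (hle1 k) (by exact_mod_cast hkn)
      · rw [Set.indicator_of_notMem hmem, zero_mul, abs_zero]
        exact Real.rpow_pos_of_pos hε _
  constructor
  · exact fun x _ hx => main x hx
  · intro x hxne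
    by_cases h : IsUnit x
    · exact Or.inl h
    · obtain ⟨e, _, he0, _, hex⟩ := main x h
      exact Or.inr ⟨e, he0, hex⟩
end
end

section
/- The nontrivial idempotents of the ring R̄ of Colombeau generalized real numbers are exactly the classes [χ_S] of characteristic functions of subsets S ⊆ (0,1] such that 0 lies in the topological closure (in ℝ) of both S and its complement (0,1] \ S. -/
noncomputable section

open Real

lemma mem_negIdeal {x : EMring} : x ∈ NegIdeal ↔ Negligible x.1 := Iff.rfl

lemma mkR_eq_iff_s4 {x y : EMring} : mkR x = mkR y ↔ Negligible (x.1 - y.1) := by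
  rw [mkR, mkR, Ideal.Quotient.eq]
  exact Iff.rfl

lemma negligible_of_eventually_zero {x : ℝ → ℝ}
    (h : SmallEv fun ε => x ε = 0) : Negligible x := by
  obtain ⟨η, hη, h⟩ := h
  intro n
  refine ⟨η, hη, fun ε hε hle => ?_⟩
  show |x ε| < ε ^ (n : ℝ)
  rw [h ε hε hle]
  simpa using Real.rpow_pos_of_pos hε (n : ℝ)

lemma not_mem_closure_small {S : Set ℝ} (h : (0 : ℝ) ∉ closure S) :
    ∃ η : ℝ, 0 < η ∧ ∀ ε : ℝ, 0 < ε → ε ≤ η → ε ∉ S := by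
  rw [Metric.mem_closure_iff] at h
  push_neg at h
  obtain ⟨η, hη, h⟩ := h
  refine ⟨η / 2, by linarith, fun ε hε hle hmem => ?_⟩
  have := h ε hmem
  rw [Real.dist_eq, abs_of_nonpos (by linarith)] at this
  linarith

lemma mem_closure_small {S : Set ℝ} (hS : S ⊆ Set.Ioc (0 : ℝ) 1)
    (h : (0 : ℝ) ∈ closure S) (η : ℝ) (hη : 0 < η) :
    ∃ ε : ℝ, ε ∈ S ∧ 0 < ε ∧ ε ≤ η := by
  rw [Metric.mem_closure_iff] at h
  obtain ⟨b, hb, hd⟩ := h η hη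
  have hb0 : 0 < b := (hS hb).1
  rw [Real.dist_eq, abs_of_nonpos (by linarith)] at hd
  exact ⟨b, hb, hb0, by linarith⟩

set_option maxHeartbeats 2000000 in
/-- the nontrivial idempotents of `R̄` are exactly the classes of
characteristic functions `χ_S` of sets `S ⊆ (0,1]` with `0` in the closure of both
`S` and `(0,1] \\ S`. -/
theorem nontrivial_idempotents_are_characteristic_functions :
    ∀ e : Rbar,
      (e * e = e ∧ e ≠ 0 ∧ e ≠ 1) ↔
      ∃ S : Set ℝ, S ⊆ Set.Ioc (0 : ℝ) 1 ∧
        e = mkR ⟨S.indicator fun _ => (1 : ℝ), chi_moderate S⟩ ∧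
        (0 : ℝ) ∈ closure S ∧ (0 : ℝ) ∈ closure (Set.Ioc (0 : ℝ) 1 \ S) := by
  intro e
  constructor
  · rintro ⟨hidem, hne0, hne1⟩
    obtain ⟨x, hx⟩ := Ideal.Quotient.mk_surjective e
    have hx' : mkR x = e := hx
    set S : Set ℝ := {t : ℝ | t ∈ Set.Ioc (0 : ℝ) 1 ∧ 1 / 2 ≤ x.1 t} with hSdef
    have hSsub : S ⊆ Set.Ioc (0 : ℝ) 1 := fun t ht => ht.1
    set χ : EMring := ⟨S.indicator fun _ => (1 : ℝ), chi_moderate S⟩ with hχdef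
    -- x * x - x is negligible
    have hN : Negligible (x.1 * x.1 - x.1) := by
      have : mkR (x * x) = mkR x := by
        rw [mkR, map_mul]; rw [show Ideal.Quotient.mk NegIdeal x = mkR x from rfl, hx']
        exact hidem
      have := mkR_eq_iff_s4.mp this
      simpa using this
    -- x - χ_S is negligible
    have hdiff : Negligible (x.1 - χ.1) := by
      intro n
      obtain ⟨η, hη, h⟩ := hN (n + 1)
      refine ⟨min η (1 / 3), lt_min hη (by norm_num), fun ε hε hle => ?_⟩
      have hle1 : ε ≤ η := hle.trans (min_le_left _ _)
      have hle3 : ε ≤ 1 / 3 := hle.trans (min_le_right _ _)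
      have key : |(x.1 * x.1 - x.1) ε| < ε ^ (((n + 1 : ℕ)) : ℝ) := h ε hε hle1
      have hcast : ε ^ (((n + 1 : ℕ)) : ℝ) = ε ^ (n : ℝ) * ε := by
        push_cast
        rw [Real.rpow_add hε, Real.rpow_one]
      rw [hcast, Pi.sub_apply, Pi.mul_apply] at key
      have hpow : 0 < ε ^ (n : ℝ) := Real.rpow_pos_of_pos hε _
      set a : ℝ := x.1 ε with ha
      have hfac : |a * a - a| = |a| * |a - 1| := by
        rw [← abs_mul]; ring_nf
      rw [hfac] at key
      by_cases hmem : ε ∈ S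
      · have h12 : 1 / 2 ≤ a := hmem.2
        have hind : χ.1 ε = 1 := by
          simp [hχdef, Set.indicator_of_mem hmem]
        show |x.1 ε - χ.1 ε| < ε ^ (n : ℝ)
        rw [hind, ← ha]
        have habs : 1 / 2 ≤ |a| := le_trans h12 (le_abs_self a)
        nlinarith [abs_nonneg (a - 1), abs_nonneg a]
      · have hind : χ.1 ε = 0 := by
          simp [hχdef, Set.indicator_of_notMem hmem]
        have hε1 : ε ∈ Set.Ioc (0 : ℝ) 1 := ⟨hε, by linarith⟩
        have h12 : a < 1 / 2 := by
          by_contra hcon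
          exact hmem ⟨hε1, by linarith⟩
        have habs : 1 / 2 ≤ |a - 1| := by
          rw [abs_of_nonpos (by linarith)]; linarith
        show |x.1 ε - χ.1 ε| < ε ^ (n : ℝ)
        rw [hind, ← ha, sub_zero]
        nlinarith [abs_nonneg (a - 1), abs_nonneg a]
    have heχ : e = mkR χ := by
      rw [← hx']
      exact mkR_eq_iff_s4.mpr hdiff
    refine ⟨S, hSsub, heχ, ?_, ?_⟩
    · by_contra hc
      obtain ⟨η, hη, hno⟩ := not_mem_closure_small hc
      apply hne0
      rw [heχ]
      have : mkR χ = mkR 0 := by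
        apply mkR_eq_iff_s4.mpr
        apply negligible_of_eventually_zero
        refine ⟨η, hη, fun ε hε hle => ?_⟩
        simp [hχdef, Set.indicator_of_notMem (hno ε hε hle)]
      rw [this, mkR, map_zero]
    · by_contra hc
      obtain ⟨η, hη, hno⟩ := not_mem_closure_small hc
      apply hne1
      rw [heχ]
      have : mkR χ = mkR 1 := by
        apply mkR_eq_iff_s4.mpr
        apply negligible_of_eventually_zero
        refine ⟨min η 1, lt_min hη one_pos, fun ε hε hle => ?_⟩
        have hmem : ε ∈ S := by
          by_contra hcon
          exact hno ε hε (hle.trans (min_le_left _ _))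
            ⟨⟨hε, hle.trans (min_le_right _ _)⟩, hcon⟩
        show χ.1 ε - (1 : EMring).1 ε = 0
        simp [hχdef, Set.indicator_of_mem hmem]
      rw [this, mkR, map_one]
  · rintro ⟨S, hSsub, heχ, hc1, hc2⟩
    set χ : EMring := ⟨S.indicator fun _ => (1 : ℝ), chi_moderate S⟩ with hχdef
    refine ⟨?_, ?_, ?_⟩
    · rw [heχ]
      have hmul : χ * χ = χ := by
        apply Subtype.ext
        funext t
        show χ.1 t * χ.1 t = χ.1 t
        by_cases h : t ∈ S <;>
          simp [hχdef, Set.indicator_of_mem, Set.indicator_of_notMem, h]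
      show mkR χ * mkR χ = mkR χ
      rw [mkR, ← map_mul, hmul]
    · rw [heχ]
      intro h0
      have hneg : Negligible χ.1 := by
        have : χ ∈ NegIdeal := (Ideal.Quotient.eq_zero_iff_mem).mp h0
        exact this
      obtain ⟨η, hη, h⟩ := hneg 1
      obtain ⟨ε, hεS, hε0, hεle⟩ := mem_closure_small hSsub hc1 (min η (1 / 2))
        (lt_min hη (by norm_num))
      have hkey : |χ.1 ε| < ε ^ ((1 : ℕ) : ℝ) := h ε hε0 (hεle.trans (min_le_left _ _))
      have hind : χ.1 ε = 1 := by
        show S.indicator (fun _ => (1 : ℝ)) ε = 1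
        exact Set.indicator_of_mem hεS _
      rw [hind, show ((1 : ℕ) : ℝ) = (1 : ℝ) by norm_num, Real.rpow_one, abs_one] at hkey
      have h2 : ε ≤ 1 / 2 := hεle.trans (min_le_right _ _)
      linarith
    · rw [heχ]
      intro h1
      have hneg : Negligible (χ.1 - (1 : EMring).1) := by
        have h1' : mkR χ = mkR 1 := by rw [h1, mkR, map_one]
        exact mkR_eq_iff_s4.mp h1'
      obtain ⟨η, hη, h⟩ := hneg 1
      obtain ⟨ε, hεS, hε0, hεle⟩ :=
        mem_closure_small (fun t ht => ht.1) hc2 (min η (1 / 2))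
          (lt_min hη (by norm_num))
      have : |(χ.1 - (1 : EMring).1) ε| < ε ^ ((1 : ℕ) : ℝ) :=
        h ε hε0 (hεle.trans (min_le_left _ _))
      have hind : χ.1 ε = 0 := by
        show S.indicator (fun _ => (1 : ℝ)) ε = 0
        exact Set.indicator_of_notMem hεS.2 _
      rw [show ((1 : ℕ) : ℝ) = (1 : ℝ) by norm_num, Real.rpow_one] at this
      have hone : (1 : EMring).1 ε = 1 := rfl
      rw [Pi.sub_apply, hind, hone, zero_sub, abs_neg, abs_one] at this
      have h2 : ε ≤ 1 / 2 := hεle.trans (min_le_right _ _)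
      linarith
end
end

section
/- Let Inv(R̄)_+ be the set of invertible and nonnegative elements of the ring R̄ of Colombeau generalized real numbers. Then Inv(R̄)_+ is an open subset of R̄ in the sharp topology, and it is closed under multiplication and multiplicative inverses. -/
noncomputable section

open Real

/-- The set of invertible nonnegative generalized numbers. -/
def InvPos (x : Rbar) : Prop := IsUnit x ∧ NonnegQ x

lemma moderate_rep (w : EMring) : Moderate w.1 := w.2

lemma mkR_mul (a b : EMring) : mkR (a * b) = mkR a * mkR b :=
  RingHom.map_mul (Ideal.Quotient.mk NegIdeal) a b

lemma mkR_add (a b : EMring) : mkR (a + b) = mkR a + mkR b :=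
  RingHom.map_add (Ideal.Quotient.mk NegIdeal) a b

lemma mkR_one : mkR (1 : EMring) = 1 :=
  RingHom.map_one (Ideal.Quotient.mk NegIdeal)

lemma negligible_of_eventuallyZero {w : ℝ → ℝ} (h : SmallEv fun ε => w ε = 0) :
    Negligible w := by
  obtain ⟨η, hη, h⟩ := h
  intro n
  refine ⟨η, hη, fun ε hε hle => ?_⟩
  show |w ε| < ε ^ (n : ℝ)
  rw [h ε hε hle]
  simpa using Real.rpow_pos_of_pos hε (n : ℝ)

lemma invPos_of_geAlpha {x : Rbar} {m : ℝ} (h : GeAlpha m x) : InvPos x := by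
  obtain ⟨x', hx', η, hη, hev⟩ := h
  have hpos : ∀ ε : ℝ, 0 < ε → ε ≤ η → 0 < x'.1 ε := fun ε hε hle =>
    lt_of_lt_of_le (Real.rpow_pos_of_pos hε m) (hev ε hε hle)
  constructor
  · -- invertibility
    set zf : ℝ → ℝ := fun ε => if 0 < ε ∧ ε ^ m ≤ x'.1 ε then (x'.1 ε)⁻¹ else 0 with hzf
    have hzmod : Moderate zf := by
      refine ⟨-m - 1, 1/2, by norm_num, fun ε hε hle => ?_⟩
      have hε1 : ε < 1 := by linarith
      have hpow : 0 < ε ^ (-m - 1) := Real.rpow_pos_of_pos hε _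
      by_cases hc : 0 < ε ∧ ε ^ m ≤ x'.1 ε
      · have hx0 : 0 < x'.1 ε := lt_of_lt_of_le (Real.rpow_pos_of_pos hε m) hc.2
        have hinv : (x'.1 ε)⁻¹ ≤ ε ^ (-m) := by
          rw [Real.rpow_neg hε.le]
          exact inv_anti₀ (Real.rpow_pos_of_pos hε m) hc.2
        have habs : |zf ε| = (x'.1 ε)⁻¹ := by
          rw [hzf]
          simp only [hc, if_pos, and_self]
          exact abs_of_nonneg (inv_nonneg.mpr hx0.le)
        have hsplit : ε ^ (-m - 1) = ε ^ (-m) * ε⁻¹ := by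
          rw [← Real.rpow_neg_one ε, ← Real.rpow_add hε]
          ring_nf
        have hinv1 : 1 < ε⁻¹ := (one_lt_inv₀ hε).mpr hε1
        have hposm : 0 < ε ^ (-m) := Real.rpow_pos_of_pos hε _
        show |zf ε| < ε ^ (-m - 1)
        rw [habs, hsplit]
        nlinarith
      · show |zf ε| < ε ^ (-m - 1)
        rw [hzf]
        simp only [hc, if_neg, not_false_iff]
        simpa using hpow
    have hprod : mkR x' * mkR ⟨zf, hzmod⟩ = 1 := by
      rw [← mkR_mul, show (1 : Rbar) = mkR 1 from mkR_one.symm, mkR_eq_iff]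
      apply negligible_of_eventuallyZero
      refine ⟨η, hη, fun ε hε hle => ?_⟩
      have hc : 0 < ε ∧ ε ^ m ≤ x'.1 ε := ⟨hε, hev ε hε hle⟩
      have hx0 : x'.1 ε ≠ 0 := (hpos ε hε hle).ne'
      show x'.1 ε * zf ε - 1 = 0
      rw [hzf]
      simp [hc, mul_inv_cancel₀ hx0]
    rw [← hx']
    exact IsUnit.of_mul_eq_one _ hprod
  · -- nonnegativity
    set xf : ℝ → ℝ := fun ε => max (x'.1 ε) 0 with hxf
    have hmod : Moderate xf := by
      obtain ⟨r, η', hη', hb⟩ := moderate_rep x'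
      refine ⟨r, η', hη', fun ε hε hle => lt_of_le_of_lt ?_ (hb ε hε hle)⟩
      rw [hxf]
      simp only [abs_of_nonneg (le_max_right (x'.1 ε) 0)]
      exact max_le (le_abs_self _) (abs_nonneg _)
    refine ⟨⟨xf, hmod⟩, ?_, fun ε hε _ => le_max_right _ _⟩
    rw [← hx', mkR_eq_iff]
    apply negligible_of_eventuallyZero
    refine ⟨η, hη, fun ε hε hle => ?_⟩
    show xf ε - x'.1 ε = 0
    rw [hxf]
    simp [max_eq_left (hpos ε hε hle).le]

lemma half_le_bound {a b ε t : ℝ} (hε : 0 < ε) (hε2 : ε ≤ 1/2)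
    (ha : 0 ≤ a) (hab : 1/2 ≤ a * b) (hb : b ≤ ε ^ t) :
    ε ^ (1 - t) ≤ a := by
  have hc : (0:ℝ) < ε ^ t := Real.rpow_pos_of_pos hε t
  have hd : (0:ℝ) < ε ^ (-t) := Real.rpow_pos_of_pos hε (-t)
  have hcd : ε ^ t * ε ^ (-t) = 1 := by
    rw [← Real.rpow_add hε]; simp
  have hac : 1/2 ≤ a * ε ^ t := le_trans hab (mul_le_mul_of_nonneg_left hb ha)
  have h3 : ε ^ (1 - t) = ε * ε ^ (-t) := by
    rw [show (1 - t) = 1 + (-t) by ring, Real.rpow_add hε, Real.rpow_one]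
  rw [h3]
  nlinarith

lemma eventually_half_le {f : ℝ → ℝ} (h : Negligible (f - 1)) :
    SmallEv fun ε => 1/2 ≤ f ε := by
  obtain ⟨η, hη, h⟩ := h 1
  refine ⟨min η (1/2), lt_min hη (by norm_num), fun ε hε hle => ?_⟩
  have h1 := h ε hε (hle.trans (min_le_left _ _))
  have h2 : ε ≤ 1/2 := hle.trans (min_le_right _ _)
  have habs : |f ε - 1| < ε := by
    have : ε ^ ((1 : ℕ) : ℝ) = ε := by
      rw [Nat.cast_one, Real.rpow_one]
    simpa [this] using h1
  have := abs_lt.mp habs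
  linarith [this.1]

lemma geAlpha_of_invPos {x : Rbar} (h : InvPos x) : ∃ m : ℝ, GeAlpha m x := by
  obtain ⟨hu, x', hx', hnn⟩ := h
  obtain ⟨u, hu⟩ := hu
  obtain ⟨z', hz'⟩ := Ideal.Quotient.mk_surjective ((u⁻¹ : Rbarˣ) : Rbar)
  have hxz : mkR (x' * z') = mkR 1 := by
    rw [mkR_mul, mkR_one, hx']
    show x * ((Ideal.Quotient.mk NegIdeal) z') = 1
    rw [hz', ← hu]
    exact u.mul_inv
  have hneg : Negligible ((x' * z').1 - (1 : EMring).1) := mkR_eq_iff.mp hxz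
  have hhalf : SmallEv fun ε => 1/2 ≤ x'.1 ε * z'.1 ε := by
    have : Negligible ((x'.1 * z'.1) - 1) := hneg
    exact eventually_half_le this
  obtain ⟨t, ηt, hηt, hzb⟩ := moderate_rep z'
  obtain ⟨η₁, hη₁, hh⟩ := hhalf
  refine ⟨1 - t, x', hx', min (min η₁ ηt) (min 1 (1/2)),
    lt_min (lt_min hη₁ hηt) (by norm_num), fun ε hε hle => ?_⟩
  have hle1 : ε ≤ η₁ := hle.trans ((min_le_left _ _).trans (min_le_left _ _))
  have hle2 : ε ≤ ηt := hle.trans ((min_le_left _ _).trans (min_le_right _ _))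
  have hle3 : ε ≤ 1 := hle.trans ((min_le_right _ _).trans (min_le_left _ _))
  have hle4 : ε ≤ 1/2 := hle.trans ((min_le_right _ _).trans (min_le_right _ _))
  have ha : 0 ≤ x'.1 ε := hnn ε hε hle3
  have hab : 1/2 ≤ x'.1 ε * |z'.1 ε| := by
    have h1 := hh ε hε hle1
    have : x'.1 ε * z'.1 ε ≤ x'.1 ε * |z'.1 ε| :=
      mul_le_mul_of_nonneg_left (le_abs_self _) ha
    linarith
  exact half_le_bound hε hle4 ha hab (hzb ε hε hle2).le

lemma exists_rep_lt {z : Rbar} {s : ℝ} (hz : z ≠ 0) (h : normQ z < Real.exp (-s)) :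
    ∃ w : EMring, mkR w = z ∧ SmallEv fun ε => |w.1 ε| < ε ^ s := by
  have hVQ : s < VQ z := by
    rw [normQ, if_neg hz] at h
    have := Real.exp_lt_exp.mp h
    linarith
  by_contra hcon
  push_neg at hcon
  have hS : ∀ r ∈ {r : ℝ | ∃ x' : EMring, mkR x' = z ∧ SmallEv fun ε => |x'.1 ε| < ε ^ r},
      r ≤ s := by
    rintro r ⟨x', hx', η', hη', hb⟩
    by_contra hr
    push_neg at hr
    refine hcon x' hx' ⟨min η' 1, lt_min hη' one_pos, fun ε hε hle => ?_⟩
    have h1 := hb ε hε (hle.trans (min_le_left _ _))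
    have h2 : ε ≤ 1 := hle.trans (min_le_right _ _)
    exact lt_of_lt_of_le h1 (Real.rpow_le_rpow_of_exponent_ge hε h2 hr.le)
  have hne : Set.Nonempty
      {r : ℝ | ∃ x' : EMring, mkR x' = z ∧ SmallEv fun ε => |x'.1 ε| < ε ^ r} := by
    obtain ⟨w, hw⟩ := Ideal.Quotient.mk_surjective z
    obtain ⟨r, hr⟩ := moderate_rep w
    exact ⟨r, w, hw, hr⟩
  have hle := csSup_le hne hS
  rw [VQ] at hVQ
  linarith

/-- `Inv(R̄)₊` is open in the sharp topology and closed under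
multiplication and multiplicative inverses. -/
theorem invPos_open_and_multiplicative :
    (∀ x : Rbar, InvPos x → ∃ δ : ℝ, 0 < δ ∧ ∀ y : Rbar, sharpDist y x < δ → InvPos y) ∧
    (∀ x y : Rbar, InvPos x → InvPos y → InvPos (x * y)) ∧
    (∀ x y : Rbar, InvPos x → x * y = 1 → InvPos y) := by
  refine ⟨?_, ?_, ?_⟩
  · -- openness
    intro x hx
    obtain ⟨m, x', hx', η, hη, hev⟩ := geAlpha_of_invPos hx
    refine ⟨Real.exp (-(m + 1)), Real.exp_pos _, fun y hy => ?_⟩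
    by_cases hyx : y = x
    · rw [hyx]; exact hx
    · have hz : y - x ≠ 0 := sub_ne_zero.mpr hyx
      obtain ⟨w, hw, η₂, hη₂, hwv⟩ := exists_rep_lt hz hy
      apply invPos_of_geAlpha (m := m + 1)
      refine ⟨x' + w, ?_, min (min η η₂) (1/2),
        lt_min (lt_min hη hη₂) (by norm_num), fun ε hε hle => ?_⟩
      · rw [mkR_add, hx', hw]; ring
      · have hle1 : ε ≤ η := hle.trans ((min_le_left _ _).trans (min_le_left _ _))
        have hle2 : ε ≤ η₂ := hle.trans ((min_le_left _ _).trans (min_le_right _ _))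
        have hle3 : ε ≤ 1/2 := hle.trans (min_le_right _ _)
        have h1 := hev ε hε hle1
        have h2 := abs_lt.mp (hwv ε hε hle2)
        have hm : (0:ℝ) < ε ^ m := Real.rpow_pos_of_pos hε m
        have hsplit : ε ^ (m + 1) = ε ^ m * ε := by
          rw [Real.rpow_add hε, Real.rpow_one]
        show ε ^ (m + 1) ≤ x'.1 ε + w.1 ε
        rw [hsplit] at h2 ⊢
        nlinarith [h2.1]
  · -- multiplication
    intro x y hx hy
    obtain ⟨m, x', hx', η₁, hη₁, hevx⟩ := geAlpha_of_invPos hx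
    obtain ⟨k, y', hy', η₂, hη₂, hevy⟩ := geAlpha_of_invPos hy
    apply invPos_of_geAlpha (m := m + k)
    refine ⟨x' * y', by rw [mkR_mul, hx', hy'], min η₁ η₂, lt_min hη₁ hη₂,
      fun ε hε hle => ?_⟩
    have h1 := hevx ε hε (hle.trans (min_le_left _ _))
    have h2 := hevy ε hε (hle.trans (min_le_right _ _))
    have hm : (0:ℝ) < ε ^ m := Real.rpow_pos_of_pos hε m
    have hk : (0:ℝ) < ε ^ k := Real.rpow_pos_of_pos hε k
    show ε ^ (m + k) ≤ x'.1 ε * y'.1 ε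
    rw [Real.rpow_add hε]
    exact mul_le_mul h1 h2 hk.le (le_trans hm.le h1)
  · -- inverses
    intro x y hx hxy
    obtain ⟨m, x', hx', η, hη, hev⟩ := geAlpha_of_invPos hx
    obtain ⟨y', hy'⟩ := Ideal.Quotient.mk_surjective y
    have hy'' : mkR y' = y := hy'
    have hxz : mkR (x' * y') = mkR 1 := by
      rw [mkR_mul, mkR_one, hx', hy'', hxy]
    have hneg : Negligible ((x'.1 * y'.1) - 1) := mkR_eq_iff.mp hxz
    have hhalf := eventually_half_le hneg
    obtain ⟨s, ηs, hηs, hxb⟩ := moderate_rep x'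
    obtain ⟨η₁, hη₁, hh⟩ := hhalf
    apply invPos_of_geAlpha (m := 1 - s)
    refine ⟨y', hy'', min (min η₁ ηs) (min η (1/2)),
      lt_min (lt_min hη₁ hηs) (lt_min hη (by norm_num)), fun ε hε hle => ?_⟩
    have hle1 : ε ≤ η₁ := hle.trans ((min_le_left _ _).trans (min_le_left _ _))
    have hle2 : ε ≤ ηs := hle.trans ((min_le_left _ _).trans (min_le_right _ _))
    have hle3 : ε ≤ η := hle.trans ((min_le_right _ _).trans (min_le_left _ _))
    have hle4 : ε ≤ 1/2 := hle.trans ((min_le_right _ _).trans (min_le_right _ _))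
    have hxpos : 0 < x'.1 ε :=
      lt_of_lt_of_le (Real.rpow_pos_of_pos hε m) (hev ε hε hle3)
    have h1 : 1/2 ≤ x'.1 ε * y'.1 ε := hh ε hε hle1
    have ha : 0 ≤ y'.1 ε := by nlinarith
    have hab : 1/2 ≤ y'.1 ε * x'.1 ε := by linarith [mul_comm (x'.1 ε) (y'.1 ε)]
    have hb : x'.1 ε ≤ ε ^ s := le_trans (le_abs_self _) (hxb ε hε hle2).le
    exact half_le_bound hε hle4 ha hab hb
end
end

section
/- The positive cone of the ring R̄ of Colombeau generalized real numbers is not open in the sharp topology: for any nontrivial idempotent e ∈ R̄, the sequence x_n = e − (1−e)·α^n (n ∈ ℕ) consists of elements that are not nonnegative, yet x_n converges to the nonnegative element e in the sharp topology. -/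
noncomputable section

open Real

lemma moderate_of_abs_le {x y : ℝ → ℝ} (hx : Moderate x) (h : ∀ ε, |y ε| ≤ |x ε|) :
    Moderate y := by
  obtain ⟨r, η, hη, hr⟩ := hx
  exact ⟨r, η, hη, fun ε hε hle => lt_of_le_of_lt (h ε) (hr ε hε hle)⟩

lemma negligible_of_abs_le {x y : ℝ → ℝ} (hx : Negligible x) (h : ∀ ε, |y ε| ≤ |x ε|) :
    Negligible y := fun n => by
  obtain ⟨η, hη, hr⟩ := hx n
  exact ⟨η, hη, fun ε hε hle => lt_of_le_of_lt (h ε) (hr ε hε hle)⟩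

lemma not_negligible_spec {f : ℝ → ℝ} (h : ¬ Negligible f) :
    ∃ m : ℕ, ∀ η : ℝ, 0 < η → ∃ ε : ℝ, 0 < ε ∧ ε ≤ η ∧ ε ^ (m : ℝ) ≤ |f ε| := by
  simp only [Negligible, SmallEv] at h
  push_neg at h
  exact h

lemma abs_sq_sub (g : ℝ → ℝ) (ε : ℝ) : |(g * g - g) ε| = |g ε| * |g ε - 1| := by
  rw [← abs_mul]
  congr 1
  simp only [Pi.sub_apply, Pi.mul_apply]
  ring

lemma key_small (x : EMring) (hid : Negligible ((x : ℝ → ℝ) * x - x))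
    (hne : ¬ Negligible ((x : ℝ → ℝ) - 1)) (k : ℕ) :
    ∀ η : ℝ, 0 < η → ∃ ε : ℝ, 0 < ε ∧ ε ≤ η ∧ |(x : ℝ → ℝ) ε| < ε ^ (k : ℝ) := by
  obtain ⟨m, hm⟩ := not_negligible_spec hne
  obtain ⟨η₁, hη₁, h1⟩ := hid (m + k)
  intro η hη
  obtain ⟨ε, hε, hεη, hlow⟩ := hm (min η η₁) (lt_min hη hη₁)
  refine ⟨ε, hε, hεη.trans (min_le_left _ _), ?_⟩
  have h2 := h1 ε hε (hεη.trans (min_le_right _ _))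
  have hmpos : (0 : ℝ) < ε ^ (m : ℝ) := Real.rpow_pos_of_pos hε _
  have hkpos : (0 : ℝ) < ε ^ (k : ℝ) := Real.rpow_pos_of_pos hε _
  have hsplit : ε ^ ((m + k : ℕ) : ℝ) = ε ^ (m : ℝ) * ε ^ (k : ℝ) := by
    rw [← Real.rpow_add hε]; push_cast; ring_nf
  simp only at h2
  rw [abs_sq_sub, hsplit] at h2
  have hlow1 : ε ^ (m : ℝ) ≤ |(x : ℝ → ℝ) ε - 1| := by
    simpa [Pi.sub_apply] using hlow
  by_contra hcon
  push_neg at hcon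
  have hmul := mul_le_mul hcon hlow1 hmpos.le (abs_nonneg _)
  nlinarith
lemma normQ_nonneg (z : Rbar) : 0 ≤ normQ z := by
  unfold normQ
  split
  · exact le_refl 0
  · exact (Real.exp_pos _).le

set_option maxHeartbeats 1000000 in
/-- the positive cone of `R̄` is not open in the sharp topology: for any
nontrivial idempotent `e`, the elements `x_n = e − (1−e)·α^n` are not nonnegative, yet
`x_n → e` in the sharp topology, and `e` is nonnegative. -/
theorem positive_cone_not_open :
    ∀ e : Rbar, e * e = e → e ≠ 0 → e ≠ 1 →
      NonnegQ e ∧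
      (∀ n : ℕ, ¬ NonnegQ (e - (1 - e) * alphaQ ^ n)) ∧
      Filter.Tendsto (fun n : ℕ => sharpDist (e - (1 - e) * alphaQ ^ n) e)
        Filter.atTop (nhds 0) := by
  intro e hee he0 he1
  obtain ⟨x, rfl⟩ := Ideal.Quotient.mk_surjective e
  -- idempotency of the representative
  have hid : Negligible ((x : ℝ → ℝ) * x - x) := by
    have hmem : (x * x - x : EMring) ∈ NegIdeal :=
      Ideal.Quotient.eq_zero_iff_mem.mp
        (by rw [RingHom.map_sub, RingHom.map_mul, hee, sub_self])
    have : Negligible ((x * x - x : EMring) : ℝ → ℝ) := hmem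
    simpa using this
  have hne1 : ¬ Negligible ((x : ℝ → ℝ) - 1) := by
    intro h
    apply he1
    have hmem : (x - 1 : EMring) ∈ NegIdeal := by
      show Negligible ((x - 1 : EMring) : ℝ → ℝ)
      simpa using h
    have h0 := Ideal.Quotient.eq_zero_iff_mem.mpr hmem
    rw [RingHom.map_sub, RingHom.map_one, sub_eq_zero] at h0
    exact h0
  -- Part 1 : e is nonnegative
  have hpart1 : NonnegQ (Ideal.Quotient.mk NegIdeal x) := by
    set g : ℝ → ℝ := fun ε => max ((x : ℝ → ℝ) ε) 0 with hg
    have habs : ∀ ε, |g ε| ≤ |(x : ℝ → ℝ) ε| := fun ε => by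
      rw [hg, abs_of_nonneg (le_max_right _ _)]
      exact max_le (le_abs_self _) (abs_nonneg _)
    have hmodg : Moderate g := moderate_of_abs_le x.2 habs
    have hdiff : Negligible (g - (x : ℝ → ℝ)) := by
      refine negligible_of_abs_le hid fun ε => ?_
      rcases le_or_gt 0 ((x : ℝ → ℝ) ε) with h | h
      · have : g ε = (x : ℝ → ℝ) ε := max_eq_left h
        simp [Pi.sub_apply, this]
      · have hgε : g ε = 0 := max_eq_right h.le
        rw [Pi.sub_apply, hgε, zero_sub, abs_neg, abs_sq_sub]
        have h1 : (1 : ℝ) ≤ |(x : ℝ → ℝ) ε - 1| := by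
          rw [abs_of_neg (by linarith : (x : ℝ → ℝ) ε - 1 < 0)]
          linarith
        nlinarith [abs_nonneg ((x : ℝ → ℝ) ε)]
    refine ⟨⟨g, hmodg⟩, ?_, fun ε _ _ => le_max_right _ _⟩
    show Ideal.Quotient.mk NegIdeal _ = _
    rw [Ideal.Quotient.eq]
    show Negligible (((⟨g, hmodg⟩ : EMring) - x : EMring) : ℝ → ℝ)
    simpa using hdiff
  -- Part 2 : the x_n are not nonnegative
  have hpart2 : ∀ n : ℕ, ¬ NonnegQ (Ideal.Quotient.mk NegIdeal x
      - (1 - Ideal.Quotient.mk NegIdeal x) * alphaQ ^ n) := by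
    intro n hc
    obtain ⟨w, hw, hwpos⟩ := hc
    set a : EMring := ⟨fun ε => ε, idNet_moderate⟩ with ha
    set z : EMring := x - (1 - x) * a ^ n with hzdef
    have hz : Ideal.Quotient.mk NegIdeal z = Ideal.Quotient.mk NegIdeal x
        - (1 - Ideal.Quotient.mk NegIdeal x) * alphaQ ^ n := by
      rw [hzdef, RingHom.map_sub, RingHom.map_mul, RingHom.map_sub, RingHom.map_one,
        RingHom.map_pow]
      rfl
    have hwz : Negligible ((w : ℝ → ℝ) - z) := by
      have heq : Ideal.Quotient.mk NegIdeal w = Ideal.Quotient.mk NegIdeal z := by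
        rw [hz]; exact hw
      have hmem := Ideal.Quotient.eq.mp heq
      have : Negligible ((w - z : EMring) : ℝ → ℝ) := hmem
      simpa using this
    have hzval : ∀ ε : ℝ, (z : ℝ → ℝ) ε = (x : ℝ → ℝ) ε - (1 - (x : ℝ → ℝ) ε) * ε ^ n := by
      intro ε
      rw [hzdef]
      push_cast
      simp [ha]
    obtain ⟨η₂, hη₂, hw2⟩ := hwz (n + 1)
    obtain ⟨ε, hε, hεle, hxsmall⟩ := key_small x hid hne1 (n + 1) (min η₂ (1/3))
      (lt_min hη₂ (by norm_num))
    have hε3 : ε ≤ 1/3 := hεle.trans (min_le_right _ _)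
    have hε1 : ε ≤ 1 := by linarith
    have h2 := hw2 ε hε (hεle.trans (min_le_left _ _))
    simp only at h2
    rw [Real.rpow_natCast, Pi.sub_apply] at h2
    rw [Real.rpow_natCast] at hxsmall
    have hw0 := hwpos ε hε hε1
    have hz2 : (w : ℝ → ℝ) ε - (z : ℝ → ℝ) ε < ε ^ (n + 1) := by
      have := le_abs_self (((w : ℝ → ℝ) - z) ε)
      rw [Pi.sub_apply] at this
      linarith
    have hxlt : (x : ℝ → ℝ) ε < ε ^ (n + 1) := (abs_lt.mp hxsmall).2
    have hxgt : -(ε ^ (n + 1)) < (x : ℝ → ℝ) ε := (abs_lt.mp hxsmall).1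
    have hzv := hzval ε
    have hps : ε ^ (n + 1) = ε ^ n * ε := pow_succ ε n
    have hpn : (0 : ℝ) < ε ^ n := pow_pos hε n
    have hpn1 : ε ^ n ≤ 1 := pow_le_one₀ hε.le hε1
    have hm1 : (x : ℝ → ℝ) ε * ε ^ n < ε ^ (n + 1) * ε ^ n :=
      mul_lt_mul_of_pos_right hxlt hpn
    have hm2 : ε ^ (n + 1) * ε ^ n ≤ ε ^ (n + 1) * 1 :=
      mul_le_mul_of_nonneg_left hpn1 (pow_pos hε (n + 1)).le
    have hm3 : ε ^ n * (3 * ε) ≤ ε ^ n * 1 :=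
      mul_le_mul_of_nonneg_left (by linarith) hpn.le
    nlinarith [hw0, hz2, hzv, hps, hm1, hm2, hm3]
  refine ⟨hpart1, hpart2, ?_⟩
  -- Part 3 : convergence in the sharp topology
  set a : EMring := ⟨fun ε => ε, idNet_moderate⟩ with ha
  obtain ⟨η₀, hη₀, hb0⟩ := hid 0
  have hxbdd : ∀ ε : ℝ, 0 < ε → ε ≤ η₀ → |(x : ℝ → ℝ) ε| < 2 := by
    intro ε hε hεη
    have h2 := hb0 ε hε hεη
    simp only at h2
    rw [abs_sq_sub] at h2
    have h1 : ε ^ ((0 : ℕ) : ℝ) = 1 := by norm_num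
    rw [h1] at h2
    by_contra hcon
    push_neg at hcon
    have htri := abs_sub_abs_le_abs_sub ((x : ℝ → ℝ) ε) 1
    rw [abs_one] at htri
    nlinarith [abs_nonneg ((x : ℝ → ℝ) ε), abs_nonneg ((x : ℝ → ℝ) ε - 1)]
  have hbound : ∀ n : ℕ,
      sharpDist (Ideal.Quotient.mk NegIdeal x
        - (1 - Ideal.Quotient.mk NegIdeal x) * alphaQ ^ n) (Ideal.Quotient.mk NegIdeal x)
      ≤ Real.exp (1 - (n : ℝ)) := by
    intro n
    set c : EMring := -((1 - x) * a ^ n) with hcdef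
    have halpha : alphaQ = Ideal.Quotient.mk NegIdeal a := rfl
    have hcq : Ideal.Quotient.mk NegIdeal c
        = (Ideal.Quotient.mk NegIdeal x
          - (1 - Ideal.Quotient.mk NegIdeal x) * alphaQ ^ n) - Ideal.Quotient.mk NegIdeal x := by
      rw [hcdef, RingHom.map_neg, RingHom.map_mul, RingHom.map_sub, RingHom.map_one,
        RingHom.map_pow, halpha]
      ring
    have hcval : ∀ ε : ℝ, (c : ℝ → ℝ) ε = -((1 - (x : ℝ → ℝ) ε) * ε ^ n) := by
      intro ε
      rw [hcdef]
      push_cast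
      simp [ha]
    have hbad : ∀ η : ℝ, 0 < η → ∃ ε : ℝ, 0 < ε ∧ ε ≤ η ∧ ε ^ (n + 1) ≤ |(c : ℝ → ℝ) ε| := by
      intro η hη
      obtain ⟨ε, hε, hεle, hxs⟩ := key_small x hid hne1 (n + 1) (min η (1/2))
        (lt_min hη one_half_pos)
      refine ⟨ε, hε, hεle.trans (min_le_left _ _), ?_⟩
      have hε2 : ε ≤ 1/2 := hεle.trans (min_le_right _ _)
      have hε1 : ε ≤ 1 := by linarith
      rw [Real.rpow_natCast] at hxs
      rw [hcval, abs_neg, abs_mul, abs_of_pos (pow_pos hε n)]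
      have h1x : 1 - |(x : ℝ → ℝ) ε| ≤ |1 - (x : ℝ → ℝ) ε| := by
        have := abs_sub_abs_le_abs_sub (1 : ℝ) ((x : ℝ → ℝ) ε)
        rw [abs_one] at this
        linarith
      have hεn1 : ε ^ (n + 1) ≤ ε := pow_le_of_le_one hε.le hε1 (Nat.succ_ne_zero n)
      have hps : ε ^ (n + 1) = ε ^ n * ε := pow_succ ε n
      have hpn : (0 : ℝ) < ε ^ n := pow_pos hε n
      have hm1 : ε ^ n * ε ≤ ε ^ n * (1/2) := mul_le_mul_of_nonneg_left hε2 hpn.le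
      have hm2 : ε ^ n * (1/2) ≤ ε ^ n * |1 - (x : ℝ → ℝ) ε| :=
        mul_le_mul_of_nonneg_left (by linarith) hpn.le
      nlinarith [hps, hm1, hm2]
    have hc0 : Ideal.Quotient.mk NegIdeal c ≠ 0 := by
      intro h0
      have hneg : Negligible ((c : ℝ → ℝ)) := Ideal.Quotient.eq_zero_iff_mem.mp h0
      obtain ⟨η₂, hη₂, hsm⟩ := hneg (n + 1)
      obtain ⟨ε, hε, hεle, hb⟩ := hbad η₂ hη₂
      have := hsm ε hε hεle
      simp only at this
      rw [Real.rpow_natCast] at this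
      linarith
    have hmem : ((n : ℝ) - 1) ∈ {r : ℝ | ∃ x' : EMring,
        mkR x' = Ideal.Quotient.mk NegIdeal c ∧ SmallEv fun ε => |x'.1 ε| < ε ^ r} := by
      refine ⟨c, rfl, min η₀ (1/4), lt_min hη₀ (by norm_num), fun ε hε hεle => ?_⟩
      have hx2 := hxbdd ε hε (hεle.trans (min_le_left _ _))
      have hε4 : ε ≤ 1/4 := hεle.trans (min_le_right _ _)
      show |(c : ℝ → ℝ) ε| < ε ^ ((n : ℝ) - 1)
      rw [hcval, abs_neg, abs_mul, abs_of_pos (pow_pos hε n)]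
      have h1x : |1 - (x : ℝ → ℝ) ε| ≤ 3 := by
        calc |1 - (x : ℝ → ℝ) ε| ≤ |(1 : ℝ)| + |(x : ℝ → ℝ) ε| := abs_sub _ _
          _ ≤ 3 := by rw [abs_one]; linarith
      have hrw : ε ^ ((n : ℝ) - 1) = ε ^ n / ε := by
        rw [Real.rpow_sub hε, Real.rpow_one, Real.rpow_natCast]
      rw [hrw, lt_div_iff₀ hε]
      have hpn : (0 : ℝ) < ε ^ n := pow_pos hε n
      have hm1 : |1 - (x : ℝ → ℝ) ε| * (ε ^ n * ε) ≤ 3 * (ε ^ n * ε) :=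
        mul_le_mul_of_nonneg_right h1x (by positivity)
      nlinarith [hpn, hm1, hε4]
    have hbddabove : BddAbove {r : ℝ | ∃ x' : EMring,
        mkR x' = Ideal.Quotient.mk NegIdeal c ∧ SmallEv fun ε => |x'.1 ε| < ε ^ r} := by
      refine ⟨(n : ℝ) + 2, fun r hr => ?_⟩
      obtain ⟨x', hx', hsm⟩ := hr
      have hneg : Negligible ((x' : ℝ → ℝ) - c) := by
        have hmem' := Ideal.Quotient.eq.mp (hx' : Ideal.Quotient.mk NegIdeal x'
          = Ideal.Quotient.mk NegIdeal c)
        have : Negligible ((x' - c : EMring) : ℝ → ℝ) := hmem'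
        simpa using this
      by_contra hcon
      push_neg at hcon
      obtain ⟨η₂, hη₂, hs⟩ := smallEv_and hsm (hneg (n + 2))
      obtain ⟨ε, hε, hεle, hb⟩ := hbad (min η₂ (1/2)) (lt_min hη₂ one_half_pos)
      have hε2 : ε ≤ 1/2 := hεle.trans (min_le_right _ _)
      have hε1 : ε ≤ 1 := by linarith
      obtain ⟨h1, h2⟩ := hs ε hε (hεle.trans (min_le_left _ _))
      rw [Real.rpow_natCast, Pi.sub_apply] at h2
      have hcle : |(c : ℝ → ℝ) ε| - |(x' : ℝ → ℝ) ε| ≤ |(x' : ℝ → ℝ) ε - (c : ℝ → ℝ) ε| := by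
        have := abs_sub_abs_le_abs_sub ((c : ℝ → ℝ) ε) ((x' : ℝ → ℝ) ε)
        rw [abs_sub_comm] at this
        exact this
      have hrle : ε ^ r ≤ ε ^ ((n : ℝ) + 2) :=
        Real.rpow_le_rpow_of_exponent_ge hε hε1 hcon.le
      have hrn : ε ^ ((n : ℝ) + 2) = ε ^ (n + 2) := by
        rw [← Real.rpow_natCast ε (n + 2)]
        push_cast
        ring_nf
      have hps : ε ^ (n + 2) = ε * ε ^ (n + 1) := by ring
      have hm1 : ε * ε ^ (n + 1) ≤ (1/2) * ε ^ (n + 1) :=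
        mul_le_mul_of_nonneg_right hε2 (pow_pos hε (n + 1)).le
      nlinarith [pow_pos hε (n + 1), h1, hb, hcle, hrle, hrn, hps, hm1, h2]
    have hVQ : (n : ℝ) - 1 ≤ VQ (Ideal.Quotient.mk NegIdeal c) := le_csSup hbddabove hmem
    have hsd : sharpDist (Ideal.Quotient.mk NegIdeal x
        - (1 - Ideal.Quotient.mk NegIdeal x) * alphaQ ^ n) (Ideal.Quotient.mk NegIdeal x)
        = Real.exp (-(VQ (Ideal.Quotient.mk NegIdeal c))) := by
      rw [sharpDist, ← hcq, normQ, if_neg hc0]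
    rw [hsd, Real.exp_le_exp]
    linarith
  have hnn : ∀ n : ℕ, 0 ≤ sharpDist (Ideal.Quotient.mk NegIdeal x
      - (1 - Ideal.Quotient.mk NegIdeal x) * alphaQ ^ n) (Ideal.Quotient.mk NegIdeal x) :=
    fun n => normQ_nonneg _
  refine squeeze_zero hnn hbound ?_
  have h1 : Filter.Tendsto (fun n : ℕ => (1 : ℝ) - (n : ℝ)) Filter.atTop Filter.atBot := by
    simp only [sub_eq_add_neg]
    apply Filter.tendsto_atBot_add_const_left
    exact Filter.tendsto_neg_atBot_iff.mpr tendsto_natCast_atTop_atTop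
  exact Real.tendsto_exp_atBot.comp h1
end
end

section
/- Fix a real number r with 0 < r < 1. The hypersequence n ↦ r^n (n ∈ Ñ, where r^n = [ε ↦ r^{n_ε}]) converges to 0 in the sharp topology of R̄: for every t > 0, taking n₀ = [ε ↦ 2·⌊(t/|ln r|)·|ln ε|⌋ + 1] ∈ Ñ, every n ∈ Ñ with n > n₀ satisfies |r^n| < α^t. Moreover n₀ is moderate, with n₀ ≤ C·α^{−1} for some constant C. -/
noncomputable section

open Real

/-- for `0 < r < 1` the hypersequence `n ↦ r^n` converges to `0` in the
sharp topology, with explicit witness `n₀(ε) = 2⌊(t/|ln r|)·|ln ε|⌋ + 1`, and `n₀` is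
moderate with `n₀ ≤ C·α^{-1}`. -/
theorem hyperseq_geometric_tendsto_zero :
    ∀ r : ℝ, 0 < r → r < 1 → ∀ t : ℝ, 0 < t →
      -- `n₀` is a hypernatural
      (Moderate fun ε => ((2 * Nat.floor ((t / |Real.log r|) * |Real.log ε|) + 1 : ℕ) : ℝ)) ∧
      -- moderateness estimate `n₀ ≤ C · α^{-1}`
      (∃ C : ℝ, SmallEv fun ε =>
        ((2 * Nat.floor ((t / |Real.log r|) * |Real.log ε|) + 1 : ℕ) : ℝ) ≤ C * ε ^ (-1 : ℝ)) ∧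
      -- every hypernatural `n > n₀` satisfies `|r^n| < α^t`
      (∀ n : ℝ → ℕ, Moderate (fun ε => (n ε : ℝ)) →
        (SmallEv fun ε => 2 * Nat.floor ((t / |Real.log r|) * |Real.log ε|) + 1 < n ε) →
        SmallEv fun ε => |r ^ (n ε)| < ε ^ t) := by
  intro r hr0 hr1 t ht
  have hlogr : Real.log r < 0 := Real.log_neg hr0 hr1
  have habs : |Real.log r| = -Real.log r := abs_of_neg hlogr
  have hL : 0 < -Real.log r := neg_pos.mpr hlogr
  set q : ℝ := t / |Real.log r| with hqdef
  have hq0 : 0 < q := div_pos ht (by rw [habs]; exact hL)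
  set C : ℝ := 2 * q + 1 with hCdef
  have hC0 : 0 < C := by positivity
  have hbound : ∀ ε : ℝ, 0 < ε → ε ≤ 1 →
      ((2 * Nat.floor (q * |Real.log ε|) + 1 : ℕ) : ℝ) ≤ C * ε ^ (-1 : ℝ) := by
    intro ε hε hε1
    have hlogε : Real.log ε ≤ 0 := Real.log_nonpos (le_of_lt hε) hε1
    have habsε : |Real.log ε| = -Real.log ε := abs_of_nonpos hlogε
    have ha0 : 0 ≤ q * |Real.log ε| := mul_nonneg hq0.le (abs_nonneg _)
    have hfl : (Nat.floor (q * |Real.log ε|) : ℝ) ≤ q * |Real.log ε| := Nat.floor_le ha0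
    have hinv : (1:ℝ) ≤ ε⁻¹ := by
      have h := mul_inv_cancel₀ (ne_of_gt hε)
      nlinarith [inv_pos.mpr hε]
    have hlog_le : -Real.log ε ≤ ε⁻¹ := by
      have h1 : Real.log ε⁻¹ ≤ ε⁻¹ - 1 := Real.log_le_sub_one_of_pos (inv_pos.mpr hε)
      rw [Real.log_inv] at h1; linarith
    have h2 : 2 * q * (-Real.log ε) ≤ 2 * q * ε⁻¹ := by nlinarith
    rw [Real.rpow_neg_one]
    push_cast
    have h2' : 2 * q * |Real.log ε| ≤ 2 * q * ε⁻¹ := by rw [habsε]; exact h2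
    nlinarith [hfl, h2']
  refine ⟨⟨-2, min 1 (1 / (C + 1)), by positivity, ?_⟩, ⟨C, 1, one_pos, hbound⟩, ?_⟩
  · intro ε hε hεle
    have hε1 : ε ≤ 1 := le_trans hεle (min_le_left _ _)
    have hεC : ε ≤ 1 / (C + 1) := le_trans hεle (min_le_right _ _)
    have hb := hbound ε hε hε1
    rw [Real.rpow_neg_one] at hb
    have hinvC : C + 1 ≤ ε⁻¹ := by
      rw [le_inv_comm₀ (by positivity) hε]
      rwa [div_eq_mul_inv, one_mul] at hεC
    have habsn : |((2 * Nat.floor (q * |Real.log ε|) + 1 : ℕ) : ℝ)| =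
        ((2 * Nat.floor (q * |Real.log ε|) + 1 : ℕ) : ℝ) := abs_of_nonneg (by positivity)
    have hrpow : ε ^ (-2 : ℝ) = ε⁻¹ * ε⁻¹ := by
      rw [show (-2 : ℝ) = -(2:ℕ) by norm_num, Real.rpow_neg hε.le, Real.rpow_natCast]
      rw [sq, mul_inv]
    simp only [habsn, hrpow]
    have hinvpos : 0 < ε⁻¹ := inv_pos.mpr hε
    nlinarith [hb]
  · rintro n - ⟨η, hη, hn⟩
    refine ⟨min η (1 / 2), by positivity, ?_⟩
    intro ε hε hεle
    have hεη : ε ≤ η := le_trans hεle (min_le_left _ _)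
    have hε1 : ε < 1 := lt_of_le_of_lt (le_trans hεle (min_le_right _ _)) (by norm_num)
    have hlogε : Real.log ε < 0 := Real.log_neg hε hε1
    have habsε : |Real.log ε| = -Real.log ε := abs_of_neg hlogε
    have hgt := hn ε hε hεη
    set a : ℝ := q * |Real.log ε| with hadef
    have hfloor : a - 1 < (Nat.floor a : ℝ) := Nat.sub_one_lt_floor a
    have ha0 : 0 ≤ a := mul_nonneg hq0.le (abs_nonneg _)
    have hna : a < (n ε : ℝ) := by
      have h2 : (2 * (Nat.floor a : ℝ) + 2) ≤ (n ε : ℝ) := by exact_mod_cast hgt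
      nlinarith
    have hrn : |r ^ n ε| = Real.exp ((n ε : ℝ) * Real.log r) := by
      rw [abs_of_pos (pow_pos hr0 _), ← Real.exp_log (pow_pos hr0 (n ε)), Real.log_pow]
    have hεt : ε ^ t = Real.exp (t * Real.log ε) := by
      rw [Real.rpow_def_of_pos hε, mul_comm]
    rw [hrn, hεt]
    apply Real.exp_lt_exp.mpr
    have hmul : a * (-Real.log r) = t * (-Real.log ε) := by
      rw [hadef, hqdef, habs, habsε]
      field_simp
      rw [mul_div_cancel_left₀ _ (ne_of_lt hlogr)]
    have := mul_lt_mul_of_pos_right hna hL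
    nlinarith
end
end

section
/- Let A : R̄^n → R̄^n be an R̄-linear map, where R̄ is the ring of Colombeau generalized real numbers. Then the following are equivalent: (i) A is injective; (ii) A is surjective; (iii) det(A) is invertible in R̄. -/
noncomputable section

open Real

instance : CommRing Rbar := inferInstance

section Aux
open Classical in
/-- If a representative is bounded below by `ε^m` eventually, its class is a unit. -/
lemma isUnit_mkR_of_lower_bound (x : EMring) (m : ℕ)
    (h : SmallEv fun ε => ε ^ (m : ℝ) ≤ |x.1 ε|) : IsUnit (mkR x) := by
  classical
  obtain ⟨η, hη, hb⟩ := h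
  have hmod : Moderate (fun ε => if 0 < ε ∧ ε ^ (m:ℝ) ≤ |x.1 ε| then (x.1 ε)⁻¹ else 0) := by
    refine ⟨-((m:ℝ)+1), 1/2, by norm_num, fun ε hε hle => ?_⟩
    have hε1 : ε < 1 := lt_of_le_of_lt hle (by norm_num)
    have hpow : (0:ℝ) < ε ^ (-((m:ℝ)+1)) := Real.rpow_pos_of_pos hε _
    show |if 0 < ε ∧ ε ^ (m:ℝ) ≤ |x.1 ε| then (x.1 ε)⁻¹ else 0| < ε ^ (-((m:ℝ)+1))
    by_cases hc : 0 < ε ∧ ε ^ (m:ℝ) ≤ |x.1 ε|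
    · rw [if_pos hc]
      have h1 : 0 < ε ^ (m:ℝ) := Real.rpow_pos_of_pos hε _
      have h2 : |(x.1 ε)⁻¹| = |x.1 ε|⁻¹ := abs_inv _
      rw [h2]
      have h3 : |x.1 ε|⁻¹ ≤ (ε ^ (m:ℝ))⁻¹ := by
        apply inv_anti₀ h1 hc.2
      have h4 : (ε ^ (m:ℝ))⁻¹ = ε ^ (-(m:ℝ)) := by
        rw [← Real.rpow_neg hε.le]
      have h5 : ε ^ (-(m:ℝ)) < ε ^ (-((m:ℝ)+1)) :=
        Real.rpow_lt_rpow_of_exponent_gt hε hε1 (by linarith)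
      calc |x.1 ε|⁻¹ ≤ ε ^ (-(m:ℝ)) := h4 ▸ h3
        _ < ε ^ (-((m:ℝ)+1)) := h5
    · rw [if_neg hc, abs_zero]
      exact hpow
  set y : EMring := ⟨_, hmod⟩ with hy
  refine IsUnit.of_mul_eq_one (a := mkR x) (mkR y) ?_
  have : mkR x * mkR y = mkR (x * y) := (map_mul (Ideal.Quotient.mk NegIdeal) x y).symm
  rw [this]
  have hone : (mkR (1 : EMring)) = 1 := map_one (Ideal.Quotient.mk NegIdeal)
  rw [← hone]
  refine Ideal.Quotient.eq.mpr ?_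
  show Negligible ((x * y - 1 : EMring) : ℝ → ℝ)
  intro q
  refine ⟨min η 1, lt_min hη one_pos, fun ε hε hle => ?_⟩
  have hbε : ε ^ (m:ℝ) ≤ |x.1 ε| := hb ε hε (hle.trans (min_le_left _ _))
  have hxne : x.1 ε ≠ 0 := by
    intro h0
    rw [h0, abs_zero] at hbε
    exact absurd (lt_of_lt_of_le (Real.rpow_pos_of_pos hε _) hbε) (lt_irrefl 0)
  have hval : ((x * y - 1 : EMring) : ℝ → ℝ) ε = x.1 ε * (if 0 < ε ∧ ε ^ (m:ℝ) ≤ |x.1 ε| then (x.1 ε)⁻¹ else 0) - 1 := rfl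
  show |((x * y - 1 : EMring) : ℝ → ℝ) ε| < ε ^ (q:ℝ)
  rw [hval, if_pos ⟨hε, hbε⟩, mul_inv_cancel₀ hxne, sub_self, abs_zero]
  exact Real.rpow_pos_of_pos hε _

/-- Recursive choice of a strictly decreasing sequence of small points. -/
lemma exists_good_seq {d : ℝ → ℝ} (g : ℕ → ℕ) {c : ℝ} (hc : 0 < c)
    (H : ∀ (q : ℕ) (η : ℝ), 0 < η → ∃ ε, 0 < ε ∧ ε ≤ η ∧ |d ε| < ε ^ (q : ℝ)) :
    ∃ s : ℕ → ℝ, StrictAnti s ∧ (∀ k, 0 < s k) ∧ (∀ k, s k ≤ c) ∧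
      (∀ k, s k ≤ 1/((k:ℝ)+1)) ∧ ∀ k, |d (s k)| < s k ^ (g k : ℝ) := by
  classical
  have base := H (g 0) (min c 1) (lt_min hc one_pos)
  have step : ∀ (k : ℕ) (x : {t : ℝ // 0 < t}),
      ∃ ε, 0 < ε ∧ ε ≤ min (x.1/2) (min c (1/((k:ℝ)+2))) ∧ |d ε| < ε ^ (g (k+1) : ℝ) := by
    intro k x
    refine H (g (k+1)) _ ?_
    have := x.2
    have h2 : (0:ℝ) < 1/((k:ℝ)+2) := by positivity
    exact lt_min (by linarith) (lt_min hc h2)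
  let F : ℕ → {t : ℝ // 0 < t} := fun k => Nat.rec
    ⟨base.choose, base.choose_spec.1⟩
    (fun k ih => ⟨(step k ih).choose, (step k ih).choose_spec.1⟩) k
  have hF0 : F 0 = ⟨base.choose, base.choose_spec.1⟩ := rfl
  have hFs : ∀ k, F (k+1) = ⟨(step k (F k)).choose, (step k (F k)).choose_spec.1⟩ :=
    fun k => rfl
  refine ⟨fun k => (F k).1, ?_, fun k => (F k).2, ?_, ?_, ?_⟩
  · apply strictAnti_nat_of_succ_lt
    intro k
    have h1 := (step k (F k)).choose_spec.2.1
    rw [hFs k]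
    have h2 := (F k).2
    calc (step k (F k)).choose ≤ (F k).1/2 := (h1.trans (min_le_left _ _))
      _ < (F k).1 := by linarith
  · intro k
    cases k with
    | zero => exact base.choose_spec.2.1.trans (min_le_left _ _)
    | succ k =>
        have h1 := (step k (F k)).choose_spec.2.1
        show (F (k+1)).1 ≤ c
        rw [hFs k]
        exact h1.trans ((min_le_right _ _).trans (min_le_left _ _))
  · intro k
    cases k with
    | zero =>
        simp only [Nat.cast_zero, zero_add, hF0]
        exact base.choose_spec.2.1.trans (by simpa using min_le_right c 1)
    | succ k =>
        have h1 := (step k (F k)).choose_spec.2.1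
        show (F (k+1)).1 ≤ 1/(((k+1:ℕ):ℝ)+1)
        rw [hFs k]
        refine h1.trans ((min_le_right _ _).trans ((min_le_right _ _).trans ?_))
        push_cast
        rw [div_le_div_iff₀ (by positivity) (by positivity)]
        ring_nf
        linarith
  · intro k
    cases k with
    | zero => exact base.choose_spec.2.2
    | succ k =>
        have h1 := (step k (F k)).choose_spec.2.2
        show |d (F (k+1)).1| < (F (k+1)).1 ^ (g (k+1) : ℝ)
        rw [hFs k]
        exact h1
end Aux
-- kernelish
lemma kernelish {n : ℕ} (M : Matrix (Fin n) (Fin n) ℝ) {t : ℝ} (ht : 0 < t)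
    (hdet : |M.det| < t ^ n / (n.factorial : ℝ)) :
    ∃ v : Fin n → ℝ, ‖v‖ = 1 ∧ ‖M.mulVec v‖ ≤ t := by
  by_contra hcon
  push_neg at hcon
  have hM : ∀ w : Fin n → ℝ, t * ‖w‖ ≤ ‖M.mulVec w‖ := by
    intro w
    rcases eq_or_ne w 0 with rfl | hw
    · simp
    · have hnw : (0:ℝ) < ‖w‖ := norm_pos_iff.2 hw
      have h1 : ‖‖w‖⁻¹ • w‖ = 1 := by
        rw [norm_smul, norm_inv, norm_norm, inv_mul_cancel₀ hnw.ne']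
      have h2 := (hcon _ h1).le
      rw [Matrix.mulVec_smul, norm_smul, norm_inv, norm_norm] at h2
      rw [mul_comm]
      calc ‖w‖ * t ≤ ‖w‖ * (‖w‖⁻¹ * ‖M.mulVec w‖) := by
            exact mul_le_mul_of_nonneg_left h2 hnw.le
        _ = ‖M.mulVec w‖ := by field_simp
  have hinj : Function.Injective M.mulVec := by
    intro x y hxy
    have h0 : M.mulVec (x - y) = 0 := by
      rw [Matrix.mulVec_sub, hxy, sub_self]
    have := hM (x - y)
    rw [h0, norm_zero] at this
    have : ‖x - y‖ ≤ 0 := nonpos_of_mul_nonpos_right ?_ ht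
    · rwa [norm_le_zero_iff, sub_eq_zero] at this
    · nlinarith [norm_nonneg (x - y)]
  have hU : IsUnit M := Matrix.mulVec_injective_iff_isUnit.mp hinj
  have hud : IsUnit M.det := (Matrix.isUnit_iff_isUnit_det M).mp hU
  have hMinv : M * M⁻¹ = 1 := Matrix.mul_nonsing_inv M hud
  have hent : ∀ j i, |M⁻¹ j i| ≤ t⁻¹ := by
    intro j i
    have h3 := hM (M⁻¹.mulVec (Pi.single i 1))
    rw [Matrix.mulVec_mulVec, hMinv, Matrix.one_mulVec, Pi.norm_single, norm_one] at h3
    have h4 : |M⁻¹.mulVec (Pi.single i 1) j| ≤ ‖M⁻¹.mulVec (Pi.single i 1)‖ := by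
      rw [← Real.norm_eq_abs]; exact norm_le_pi_norm _ j
    have h5 : |M⁻¹ j i| ≤ ‖M⁻¹.mulVec (Pi.single i 1)‖ := by
      simpa using h4
    have h6 : ‖M⁻¹.mulVec (Pi.single i 1)‖ ≤ t⁻¹ := by
      calc ‖M⁻¹.mulVec (Pi.single i 1)‖ = t⁻¹ * (t * ‖M⁻¹.mulVec (Pi.single i 1)‖) := by
            field_simp
        _ ≤ t⁻¹ * 1 := mul_le_mul_of_nonneg_left h3 (inv_nonneg.2 ht.le)
        _ = t⁻¹ := mul_one _
    exact h5.trans h6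
  have hdinv : |M⁻¹.det| ≤ (n.factorial : ℝ) * t⁻¹ ^ n := by
    have h7 : |M⁻¹.det| ≤ ∑ σ : Equiv.Perm (Fin n), ∏ i, |M⁻¹ (σ i) i| := by
      rw [Matrix.det_apply]
      refine (Finset.abs_sum_le_sum_abs _ _).trans (Finset.sum_le_sum fun σ _ => ?_)
      rcases Int.units_eq_one_or σ.sign with h | h <;>
        simp [h, Finset.abs_prod, Units.smul_def]
    refine h7.trans ?_
    have h8 : ∀ σ : Equiv.Perm (Fin n), ∏ i, |M⁻¹ (σ i) i| ≤ t⁻¹ ^ n := by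
      intro σ
      calc ∏ i, |M⁻¹ (σ i) i| ≤ ∏ _i : Fin n, t⁻¹ :=
            Finset.prod_le_prod (fun i _ => abs_nonneg _) (fun i _ => hent _ _)
        _ = t⁻¹ ^ n := by simp
    calc ∑ σ : Equiv.Perm (Fin n), ∏ i, |M⁻¹ (σ i) i|
        ≤ ∑ _σ : Equiv.Perm (Fin n), t⁻¹ ^ n := Finset.sum_le_sum fun σ _ => h8 σ
      _ = (n.factorial : ℝ) * t⁻¹ ^ n := by
          simp [Finset.sum_const, Fintype.card_perm, nsmul_eq_mul]
  have hprod : M⁻¹.det * M.det = 1 := Matrix.det_nonsing_inv_mul_det M hud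
  have h9 : |M.det| * |M⁻¹.det| = 1 := by
    rw [← abs_mul, mul_comm, hprod, abs_one]
  have hfac : (0:ℝ) < (n.factorial : ℝ) := by positivity
  have hpos : (0:ℝ) < (n.factorial : ℝ) * t⁻¹ ^ n := by positivity
  have hchain : (1:ℝ) < 1 := by
    calc (1:ℝ) = |M.det| * |M⁻¹.det| := h9.symm
      _ ≤ |M.det| * ((n.factorial : ℝ) * t⁻¹ ^ n) :=
          mul_le_mul_of_nonneg_left hdinv (abs_nonneg _)
      _ < (t ^ n / (n.factorial : ℝ)) * ((n.factorial : ℝ) * t⁻¹ ^ n) :=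
          mul_lt_mul_of_pos_right hdet hpos
      _ = 1 := by
          field_simp
          rw [← mul_pow, mul_one_div_cancel ht.ne', one_pow]
  exact absurd hchain (lt_irrefl 1)
set_option synthInstance.maxHeartbeats 1000000 in
set_option maxHeartbeats 1000000 in
/-- for an `R̄`-linear map `A : R̄ⁿ → R̄ⁿ`, injectivity, surjectivity and
invertibility of the determinant are equivalent. -/
theorem linearMap_injective_iff_surjective_iff_det_isUnit :
    ∀ (n : ℕ) (A : (Fin n → Rbar) →ₗ[Rbar] (Fin n → Rbar)),
      (Function.Injective A ↔ Function.Surjective A) ∧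
      (Function.Injective A ↔ IsUnit (LinearMap.det A)) := by
  intro n A
  classical
  -- (iii) → bijective
  have unit_to_bij : IsUnit (LinearMap.det A) → Function.Bijective A := by
    intro h
    have hMA : IsUnit (LinearMap.toMatrix' A) :=
      (Matrix.isUnit_iff_isUnit_det _).mpr (by rwa [LinearMap.det_toMatrix'])
    obtain ⟨u, hu⟩ := hMA
    have hA : Matrix.toLin' (u : Matrix (Fin n) (Fin n) Rbar) = A := by
      rw [hu, Matrix.toLin'_toMatrix']
    constructor
    · intro x y hxy
      have hx : ∀ z, Matrix.toLin' ((u⁻¹ : (Matrix (Fin n) (Fin n) Rbar)ˣ) : Matrix (Fin n) (Fin n) Rbar) (A z) = z := by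
        intro z
        rw [← hA, ← Matrix.toLin'_mul_apply, u.inv_mul, Matrix.toLin'_one, LinearMap.id_apply]
      rw [← hx x, ← hx y, hxy]
    · intro y
      refine ⟨Matrix.toLin' ((u⁻¹ : (Matrix (Fin n) (Fin n) Rbar)ˣ) : Matrix (Fin n) (Fin n) Rbar) y, ?_⟩
      rw [← hA, ← Matrix.toLin'_mul_apply, u.mul_inv, Matrix.toLin'_one, LinearMap.id_apply]
  -- surjective → (iii)
  have surj_to_unit : Function.Surjective A → IsUnit (LinearMap.det A) := by
    intro hs
    obtain ⟨h, hh⟩ := Module.projective_lifting_property A LinearMap.id hs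
    exact IsUnit.of_mul_eq_one _ (by rw [← LinearMap.det_comp, hh, LinearMap.det_id])
  -- injective → (iii): the hard implication
  have key : Function.Injective A → IsUnit (LinearMap.det A) := by
    intro hinj
    rcases Nat.eq_zero_or_pos n with hn | hn
    · subst hn
      rw [← LinearMap.det_toMatrix' A, Matrix.det_isEmpty]
      exact isUnit_one
    by_contra hdu
    set MA := LinearMap.toMatrix' A with hMAdef
    have hrep : ∀ i j, ∃ x : EMring, mkR x = MA i j :=
      fun i j => Ideal.Quotient.mk_surjective _
    choose mm hmm using hrep
    set Mn : Matrix (Fin n) (Fin n) EMring := Matrix.of mm with hMn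
    have hmap : Mn.map (Ideal.Quotient.mk NegIdeal) = MA := by
      ext i j; exact hmm i j
    set D : EMring := Mn.det with hD
    have hmkD : mkR D = LinearMap.det A := by
      have h1 : mkR D = (Mn.map (Ideal.Quotient.mk NegIdeal)).det := by
        rw [mkR, (Ideal.Quotient.mk NegIdeal).map_det Mn]
        rfl
      rw [h1, hmap, hMAdef, LinearMap.det_toMatrix']
    have hdu' : ¬ IsUnit (mkR D) := by rwa [hmkD]
    have H : ∀ (q : ℕ) (η : ℝ), 0 < η → ∃ ε, 0 < ε ∧ ε ≤ η ∧ |D.1 ε| < ε ^ (q:ℝ) := by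
      intro q η hη
      by_contra hcon
      push_neg at hcon
      exact hdu' (isUnit_mkR_of_lower_bound D q ⟨η, hη, fun ε h1 h2 => hcon ε h1 h2⟩)
    obtain ⟨s, hsanti, hspos, hsc, hs1, hsd⟩ :=
      exists_good_seq (fun k => k*n+1) (c := min (1/2) (1/(n.factorial : ℝ)))
        (lt_min (by norm_num) (one_div_pos.mpr (by exact_mod_cast n.factorial_pos))) H
    have hshalf : ∀ k, s k ≤ 1/2 := fun k => (hsc k).trans (min_le_left _ _)
    -- evaluation ring homs
    let ev : ℝ → (EMring →+* ℝ) := fun ε =>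
      (Pi.evalRingHom (fun _ : ℝ => ℝ) ε).comp (EMring.subtype)
    have hevD : ∀ ε, ((ev ε).mapMatrix Mn).det = D.1 ε := by
      intro ε
      rw [← RingHom.map_det]
      rfl
    -- determinant smallness at the chosen points
    have hkb : ∀ k, |(((ev (s k)).mapMatrix Mn)).det| < ((s k)^k)^n / (n.factorial : ℝ) := by
      intro k
      rw [hevD]
      have h2 := hsd k
      have h3 : (s k) ^ ((k*n+1 : ℕ) : ℝ) = (s k) ^ (k*n+1) := by
        rw [Real.rpow_natCast]
      rw [h3] at h2
      refine h2.trans_le ?_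
      have h4 : (s k) ^ (k*n+1) = (s k)^(k*n) * (s k) := by ring
      have h5 : ((s k)^k)^n = (s k)^(k*n) := by rw [← pow_mul]
      rw [h4, h5, div_eq_mul_inv]
      refine mul_le_mul_of_nonneg_left ?_ (pow_nonneg (hspos k).le _)
      rw [← one_div]
      exact (hsc k).trans (min_le_right _ _)
    -- the approximate kernel vectors
    choose v hv1 hv2 using fun k =>
      kernelish (((ev (s k)).mapMatrix Mn)) (pow_pos (hspos k) k) (hkb k)
    have hsinj : Function.Injective s := hsanti.injective
    -- the vector of nets
    let Vf : Fin n → ℝ → ℝ := fun i ε => if h : ∃ k, s k = ε then v h.choose i else 0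
    have hVk : ∀ k i, Vf i (s k) = v k i := by
      intro k i
      have hex : ∃ k', s k' = s k := ⟨k, rfl⟩
      show (if h : ∃ k', s k' = s k then v h.choose i else 0) = v k i
      rw [dif_pos hex, hsinj hex.choose_spec]
    have hVb : ∀ i ε, |Vf i ε| ≤ 1 := by
      intro i ε
      show |if h : ∃ k, s k = ε then v h.choose i else 0| ≤ 1
      split
      · next h =>
          rw [← Real.norm_eq_abs, ← hv1 h.choose]
          exact norm_le_pi_norm _ i
      · simp
    have hVmod : ∀ i, Moderate (Vf i) := by
      intro i
      refine ⟨-1, 1/2, by norm_num, fun ε hε hle => ?_⟩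
      have h1 : ε < 1 := lt_of_le_of_lt hle (by norm_num)
      have hlt : (1 : ℝ) < ε ^ (-1 : ℝ) := by
        rw [Real.rpow_neg_one]
        exact (one_lt_inv₀ hε).mpr h1
      exact lt_of_le_of_lt (hVb i ε) hlt
    let V : Fin n → EMring := fun i => ⟨Vf i, hVmod i⟩
    -- each component of Mn *ᵥ V is negligible
    have hker : ∀ i, Mn.mulVec V i ∈ NegIdeal := by
      intro i
      show Negligible ((Mn.mulVec V) i : ℝ → ℝ)
      intro q
      refine ⟨s (q+1), hspos _, fun ε hε hle => ?_⟩
      have hval : ((Mn.mulVec V) i : ℝ → ℝ) ε = (((ev ε).mapMatrix Mn).mulVec (fun j => Vf j ε)) i := by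
        rw [RingHom.mapMatrix_apply]
        exact RingHom.map_mulVec (ev ε) Mn V i
      show |((Mn.mulVec V) i : ℝ → ℝ) ε| < ε ^ (q:ℝ)
      by_cases hexk : ∃ k, s k = ε
      · obtain ⟨k, hk⟩ := hexk
        subst hk
        have hkge : q+1 ≤ k := by
          by_contra hlt'
          push_neg at hlt'
          have h19 := hsanti hlt'
          have h20 : s k ≤ s (q+1) := hle
          exact absurd h20 (not_le.mpr h19)
        have hveq : (fun j => Vf j (s k)) = v k := funext fun j => hVk k j
        have h6 : |((Mn.mulVec V) i : ℝ → ℝ) (s k)| ≤ (s k)^k := by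
          rw [hval, hveq]
          calc |(((ev (s k)).mapMatrix Mn).mulVec (v k)) i|
              ≤ ‖((ev (s k)).mapMatrix Mn).mulVec (v k)‖ := by
                rw [← Real.norm_eq_abs]; exact norm_le_pi_norm _ i
            _ ≤ (s k)^k := hv2 k
        have h7 : (s k)^k ≤ (s k)^(q+1) :=
          pow_le_pow_of_le_one (hspos k).le ((hshalf k).trans (by norm_num)) hkge
        have h8 : (s k)^(q+1) < (s k)^q := by
          have h9 : (0:ℝ) < (s k)^q := pow_pos (hspos k) q
          have h10 : s k < 1 := (hshalf k).trans_lt (by norm_num)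
          calc (s k)^(q+1) = (s k)^q * (s k) := by ring
            _ < (s k)^q * 1 := by
                exact mul_lt_mul_of_pos_left h10 h9
            _ = (s k)^q := mul_one _
        have h11 : ((s k):ℝ) ^ (q:ℝ) = (s k)^q := Real.rpow_natCast _ q
        rw [h11]
        exact lt_of_le_of_lt (h6.trans h7) h8
      · rw [hval]
        have hz : (fun j => Vf j ε) = 0 := by
          funext j
          show (if h : ∃ k, s k = ε then v h.choose j else 0) = 0
          rw [dif_neg hexk]
        rw [hz, Matrix.mulVec_zero]
        have : |(0:Fin n → ℝ) i| = 0 := by simp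
        rw [this]
        exact Real.rpow_pos_of_pos hε _
    -- the nonzero kernel element
    let X : Fin n → Rbar := fun i => mkR (V i)
    have hAX : A X = 0 := by
      have hA' : A = Matrix.toLin' MA := (Matrix.toLin'_toMatrix' A).symm
      rw [hA', Matrix.toLin'_apply]
      funext i
      show (MA.mulVec X) i = 0
      rw [← hmap]
      have h12 := RingHom.map_mulVec (Ideal.Quotient.mk NegIdeal) Mn V i
      have hXc : (⇑(Ideal.Quotient.mk NegIdeal) ∘ V) = X := rfl
      show ((Mn.map ⇑(Ideal.Quotient.mk NegIdeal)).mulVec X) i = 0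
      rw [← hXc, ← h12]
      exact Ideal.Quotient.eq_zero_iff_mem.mpr (hker i)
    -- X is nonzero
    have hne' : Nonempty (Fin n) := ⟨⟨0, hn⟩⟩
    have hattain : ∀ k, ∃ i, |v k i| = 1 := by
      intro k
      obtain ⟨i, _, hi⟩ := Finset.exists_mem_eq_sup (Finset.univ : Finset (Fin n))
        Finset.univ_nonempty (fun i => ‖v k i‖₊)
      refine ⟨i, ?_⟩
      have h13 : ‖v k‖ = ((‖v k i‖₊ : NNReal) : ℝ) := by
        rw [Pi.norm_def, hi]
      rw [hv1 k] at h13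
      rw [← Real.norm_eq_abs, ← coe_nnnorm]
      exact h13.symm
    let idx : ℕ → Fin n := fun k => (hattain k).choose
    obtain ⟨i0, hi0⟩ := Finite.exists_infinite_fiber idx
    have hinfset : (idx ⁻¹' {i0}).Infinite := Set.infinite_coe_iff.mp hi0
    have hX0 : X ≠ 0 := by
      intro h0
      have hXi : mkR (V i0) = 0 := congrFun h0 i0
      have hmem : V i0 ∈ NegIdeal := Ideal.Quotient.eq_zero_iff_mem.mp hXi
      have hnegl : Negligible (Vf i0) := hmem
      obtain ⟨η, hη, hb2⟩ := hnegl 1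
      obtain ⟨N, hN⟩ := exists_nat_gt (1/η)
      obtain ⟨k, hkmem, hkN⟩ := hinfset.exists_gt N
      have hi0k : idx k = i0 := hkmem
      have hNpos : (0:ℝ) < (N:ℝ) := lt_trans (by positivity) hN
      have hskη : s k ≤ η := by
        have h14 : s k ≤ 1/((k:ℝ)+1) := hs1 k
        have hkNR : (N:ℝ) < (k:ℝ) := by exact_mod_cast hkN
        have h15 : 1/((k:ℝ)+1) ≤ 1/(N:ℝ) :=
          one_div_le_one_div_of_le hNpos (by linarith)
        have h16 : 1/(N:ℝ) < η := by
          rw [div_lt_iff₀ hNpos]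
          have := (div_lt_iff₀ hη).mp hN
          linarith
        linarith
      have h17 : |Vf i0 (s k)| < (s k) ^ ((1:ℕ):ℝ) := hb2 (s k) (hspos k) hskη
      rw [hVk k i0] at h17
      have h18 : |v k i0| = 1 := by rw [← hi0k]; exact (hattain k).choose_spec
      rw [h18] at h17
      have h21 : s k ^ ((1:ℕ):ℝ) = s k := by
        rw [Real.rpow_natCast, pow_one]
      rw [h21] at h17
      linarith [hshalf k]
    exact hX0 (hinj (by rw [hAX, map_zero]))
  refine ⟨⟨fun hi => (unit_to_bij (key hi)).2, fun hs => (unit_to_bij (surj_to_unit hs)).1⟩,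
    ⟨key, fun h => (unit_to_bij h).1⟩⟩
end
end
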